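/- arXiv:2011.11990 — 6 statements merged into one kernel-verified Lean document; each statement's English description precedes it below -/
import Mathlib

section
/- Derivatives of s/t in the cone. For any finite sequences I (indices in {0,1,2}) and J (indices in {1,2}) there exists a constant C > 0, determined by I and J, such that at every point of the cone K: |∂^I L^J (s/t)| ≤ C (s/t) if |I| = 0, and |∂^I L^J (s/t)| ≤ C s^{−1} if |I| > 0, where s/t denotes the function (t,x) ↦ √(t² − |x|²)/t on K. -/
noncomputable section

open MeasureTheory

/-- A point of `ℝ^{1+2}`; coordinate `0` is the time `t`, coordinates `1, 2` are spatial. -/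
abbrev Pt : Type := Fin 3 → ℝ

/-- The spatial radius `r = |x| = √((x¹)² + (x²)²)`. -/
def rad (p : Pt) : ℝ := Real.sqrt ((p 1)^2 + (p 2)^2)

/-- The coordinate partial derivative `∂_i` (with `∂_0 = ∂_t`). -/
def pd (i : Fin 3) (φ : Pt → ℝ) (p : Pt) : ℝ := fderiv ℝ φ p (Pi.single i 1)

/-- `−□φ = ∂_t²φ − ∂_1²φ − ∂_2²φ`. -/
def negBox (φ : Pt → ℝ) (p : Pt) : ℝ :=
  pd 0 (pd 0 φ) p - pd 1 (pd 1 φ) p - pd 2 (pd 2 φ) p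

/-- The Lorentz boost `L_a = x^a ∂_t + t ∂_a`, for `a ∈ {1,2}` (indexed by `Fin 2`,
with `a : Fin 2` corresponding to the spatial coordinate `a.succ`). -/
def boost (a : Fin 2) (φ : Pt → ℝ) (p : Pt) : ℝ :=
  p a.succ * pd 0 φ p + p 0 * pd a.succ φ p

/-- The semi-hyperboloidal derivative `∂̲_a = (x^a/t) ∂_t + ∂_a`, `a ∈ {1,2}` (indexed by `Fin 2`). -/
def ubd (a : Fin 2) (φ : Pt → ℝ) (p : Pt) : ℝ :=
  (p a.succ / p 0) * pd 0 φ p + pd a.succ φ p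

/-- `∂̲_β` for `β ∈ {0,1,2}`, with `∂̲_0 = ∂_t`. -/
def ubar (β : Fin 3) (φ : Pt → ℝ) (p : Pt) : ℝ :=
  if β = 0 then pd 0 φ p else (p β / p 0) * pd 0 φ p + pd β φ p

/-- Iterated coordinate derivatives `∂^I`. -/
def pdSeq : List (Fin 3) → (Pt → ℝ) → Pt → ℝ
  | [], φ => φ
  | i :: I, φ => pd i (pdSeq I φ)

/-- Iterated boosts `L^J`. -/
def boostSeq : List (Fin 2) → (Pt → ℝ) → Pt → ℝ
  | [], φ => φ
  | a :: J, φ => boost a (boostSeq J φ)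

/-- The interior of the light cone, `K = {(t,x) : r < t − 1}`. -/
def coneK : Set Pt := {p | rad p < p 0 - 1}

/-- The slab `K_{[s0,s1]} = {(t,x) ∈ K : s0² ≤ t² − r² ≤ s1²}`. -/
def slab (s0 s1 : ℝ) : Set Pt :=
  {p | rad p < p 0 - 1 ∧ s0^2 ≤ (p 0)^2 - (rad p)^2 ∧ (p 0)^2 - (rad p)^2 ≤ s1^2}

/-- The parametrization `x ↦ (√(s² + |x|²), x)` of the hyperboloid `H_s`. -/
def hyp (s : ℝ) (x : Fin 2 → ℝ) : Pt :=
  ![Real.sqrt (s^2 + (x 0)^2 + (x 1)^2), x 0, x 1]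

/-- The flat `L²` norm on the hyperboloid `H_s`. -/
def L2f (s : ℝ) (g : Pt → ℝ) : ℝ :=
  Real.sqrt (∫ x : Fin 2 → ℝ, (g (hyp s x))^2)

/-- `φ` vanishes near the conical boundary `∂K_{[s0,s1]}` (i.e. on a neighbourhood of
`r = t − 1` within the slab, in particular outside the cone on the slab). -/
def VanishNearBdry (s0 s1 : ℝ) (φ : Pt → ℝ) : Prop :=
  ∃ ε > (0:ℝ), ∀ p : Pt, 0 < p 0 → s0^2 ≤ (p 0)^2 - (rad p)^2 →
    (p 0)^2 - (rad p)^2 ≤ s1^2 → p 0 - 1 - ε < rad p → φ p = 0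

/-- The hyperboloidal energy functional `E_m(s, φ)`. -/
def energyE (m s : ℝ) (φ : Pt → ℝ) : ℝ :=
  ∫ x : Fin 2 → ℝ,
    ((pd 0 φ (hyp s x))^2 + (pd 1 φ (hyp s x))^2 + (pd 2 φ (hyp s x))^2
      + 2 * (hyp s x 1 / hyp s x 0) * pd 0 φ (hyp s x) * pd 1 φ (hyp s x)
      + 2 * (hyp s x 2 / hyp s x 0) * pd 0 φ (hyp s x) * pd 2 φ (hyp s x)
      + m^2 * (φ (hyp s x))^2)

/-- The weighted inverted time translation `Kφ = (t + r²/t) ∂_t φ + 2 x^a ∂_a φ`. -/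
def Kvf (φ : Pt → ℝ) (p : Pt) : ℝ :=
  (p 0 + (rad p)^2 / p 0) * pd 0 φ p + 2 * (p 1 * pd 1 φ p + p 2 * pd 2 φ p)

/-- The conformal energy `E_con(s, φ)`. -/
def Econ (s : ℝ) (φ : Pt → ℝ) : ℝ :=
  ∫ x : Fin 2 → ℝ,
    ((s * ubd 0 φ (hyp s x))^2 + (s * ubd 1 φ (hyp s x))^2
      + (Kvf φ (hyp s x) + φ (hyp s x))^2)

/-- The function `s/t = √(t² − |x|²)/t`. -/
def sot (p : Pt) : ℝ := Real.sqrt ((p 0)^2 - (rad p)^2) / p 0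

namespace SotAux

def S (p : Pt) : ℝ := Real.sqrt ((p 0)^2 - (rad p)^2)

lemma rad_nonneg (p : Pt) : 0 ≤ rad p := Real.sqrt_nonneg _

lemma rad_sq (p : Pt) : (rad p)^2 = (p 1)^2 + (p 2)^2 :=
  Real.sq_sqrt (by positivity)

lemma t_pos {p : Pt} (hp : p ∈ coneK) : 1 < p 0 := by
  have h := rad_nonneg p
  have : rad p < p 0 - 1 := hp
  linarith

lemma q_gt_t {p : Pt} (hp : p ∈ coneK) : p 0 < (p 0)^2 - (rad p)^2 := by
  have h1 : rad p < p 0 - 1 := hp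
  have h2 := rad_nonneg p
  nlinarith

lemma q_pos {p : Pt} (hp : p ∈ coneK) : 0 < (p 0)^2 - (rad p)^2 := by
  have := q_gt_t hp; have := t_pos hp; linarith

lemma S_pos {p : Pt} (hp : p ∈ coneK) : 0 < S p := Real.sqrt_pos.2 (q_pos hp)

lemma S_sq {p : Pt} (hp : p ∈ coneK) : (S p)^2 = (p 0)^2 - (rad p)^2 :=
  Real.sq_sqrt (q_pos hp).le

lemma one_le_S {p : Pt} (hp : p ∈ coneK) : 1 ≤ S p := by
  have h1 := S_sq hp
  have h2 := q_gt_t hp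
  have h3 := t_pos hp
  nlinarith [S_pos hp]

lemma S_le_t {p : Pt} (hp : p ∈ coneK) : S p ≤ p 0 := by
  have h1 := S_sq hp
  have h2 := rad_nonneg p
  have h3 := t_pos hp
  nlinarith [S_pos hp]

lemma t_le_S_sq {p : Pt} (hp : p ∈ coneK) : p 0 ≤ (S p)^2 := by
  rw [S_sq hp]; exact (q_gt_t hp).le

lemma abs_x1_le {p : Pt} (hp : p ∈ coneK) : |p 1| ≤ p 0 := by
  have h1 : |p 1| ≤ rad p := by
    rw [← Real.sqrt_sq_eq_abs]
    exact Real.sqrt_le_sqrt (by nlinarith [sq_nonneg (p 2)])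
  have h2 : rad p < p 0 - 1 := hp
  linarith

lemma abs_x2_le {p : Pt} (hp : p ∈ coneK) : |p 2| ≤ p 0 := by
  have h1 : |p 2| ≤ rad p := by
    rw [← Real.sqrt_sq_eq_abs]
    exact Real.sqrt_le_sqrt (by nlinarith [sq_nonneg (p 1)])
  have h2 : rad p < p 0 - 1 := hp
  linarith

lemma isOpen_coneK : IsOpen coneK := by
  have h : Continuous fun p : Pt => p 0 - 1 - rad p := by
    apply Continuous.sub
    · exact (continuous_apply 0).sub continuous_const
    · exact Real.continuous_sqrt.comp (by continuity)
  have : coneK = (fun p : Pt => p 0 - 1 - rad p) ⁻¹' (Set.Ioi 0) := by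
    ext p
    simp only [coneK, Set.mem_preimage, Set.mem_Ioi, Set.mem_setOf_eq]
    constructor <;> intro h <;> linarith
  rw [this]; exact h.isOpen_preimage _ isOpen_Ioi


structure Term where
  k : ℝ
  a : ℕ
  b : ℕ
  c : ℤ
  e : ℤ

def teval (T : Term) (p : Pt) : ℝ :=
  T.k * (p 1)^T.a * (p 2)^T.b * (p 0)^T.c * (S p)^T.e

def evalL (L : List Term) (p : Pt) : ℝ := (L.map (teval · p)).sum

def tderiv (i : Fin 3) (T : Term) : List Term :=
  if i = 0 then
    [⟨T.k * T.c, T.a, T.b, T.c - 1, T.e⟩, ⟨T.k * T.e, T.a, T.b, T.c + 1, T.e - 2⟩]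
  else if i = 1 then
    [⟨T.k * T.a, T.a - 1, T.b, T.c, T.e⟩, ⟨-(T.k * T.e), T.a + 1, T.b, T.c, T.e - 2⟩]
  else
    [⟨T.k * T.b, T.a, T.b - 1, T.c, T.e⟩, ⟨-(T.k * T.e), T.a, T.b + 1, T.c, T.e - 2⟩]

def tboost (a : Fin 2) (T : Term) : List Term :=
  if a = 0 then
    [⟨T.k * T.c, T.a + 1, T.b, T.c - 1, T.e⟩, ⟨T.k * T.a, T.a - 1, T.b, T.c + 1, T.e⟩]
  else
    [⟨T.k * T.c, T.a, T.b + 1, T.c - 1, T.e⟩, ⟨T.k * T.b, T.a, T.b - 1, T.c + 1, T.e⟩]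

def Good (n : ℕ) (T : Term) : Prop :=
  T.k = 0 ∨ ((T.a : ℤ) + T.b + T.c + T.e = -(n : ℤ) ∧ 1 - 2*(n : ℤ) ≤ T.e)

/-- Derivative of one monomial term, with directional values. -/
lemma teval_deriv (T : Term) {p : Pt} (hp : p ∈ coneK) :
    ∃ D : Pt →L[ℝ] ℝ, HasFDerivAt (teval T) D p ∧
      ∀ i : Fin 3, D (Pi.single i 1) = evalL (tderiv i T) p := by
  obtain ⟨k, a, b, c, e⟩ := T
  have h0 : (0:ℝ) < p 0 := lt_trans one_pos (t_pos hp)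
  have hS : 0 < S p := S_pos hp
  have hq : (0:ℝ) < (p 0)^2 - (p 1)^2 - (p 2)^2 := by
    have := q_pos hp; rw [rad_sq] at this; linarith
  -- basic projections
  have hproj : ∀ j : Fin 3, HasFDerivAt (fun q : Pt => q j)
      (ContinuousLinearMap.proj j : Pt →L[ℝ] ℝ) p :=
    fun j => (ContinuousLinearMap.proj j : Pt →L[ℝ] ℝ).hasFDerivAt
  have H1 : HasFDerivAt (fun q : Pt => (q 1)^a)
      (((a : ℝ) * (p 1)^(a-1)) • (ContinuousLinearMap.proj 1 : Pt →L[ℝ] ℝ)) p :=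
    (hasDerivAt_pow a (p 1)).comp_hasFDerivAt p (hproj 1)
  have H2 : HasFDerivAt (fun q : Pt => (q 2)^b)
      (((b : ℝ) * (p 2)^(b-1)) • (ContinuousLinearMap.proj 2 : Pt →L[ℝ] ℝ)) p :=
    (hasDerivAt_pow b (p 2)).comp_hasFDerivAt p (hproj 2)
  have H3 : HasFDerivAt (fun q : Pt => (q 0)^c)
      (((c : ℝ) * (p 0)^(c-1)) • (ContinuousLinearMap.proj 0 : Pt →L[ℝ] ℝ)) p :=
    by have := hasDerivAt_zpow c (p 0) (Or.inl h0.ne'); exact this.comp_hasFDerivAt p (hproj 0)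
  -- the quadratic form
  have HQ : HasFDerivAt (fun q : Pt => (q 0)^2 - (q 1)^2 - (q 2)^2)
      ((((2:ℕ):ℝ) * (p 0)^1) • (ContinuousLinearMap.proj 0 : Pt →L[ℝ] ℝ)
        - (((2:ℕ):ℝ) * (p 1)^1) • (ContinuousLinearMap.proj 1 : Pt →L[ℝ] ℝ)
        - (((2:ℕ):ℝ) * (p 2)^1) • (ContinuousLinearMap.proj 2 : Pt →L[ℝ] ℝ)) p := by
    exact (((hasDerivAt_pow 2 (p 0)).comp_hasFDerivAt p (hproj 0)).sub
      ((hasDerivAt_pow 2 (p 1)).comp_hasFDerivAt p (hproj 1))).sub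
      ((hasDerivAt_pow 2 (p 2)).comp_hasFDerivAt p (hproj 2))
  have hSfun : S = fun q : Pt => Real.sqrt ((q 0)^2 - (q 1)^2 - (q 2)^2) := by
    funext q
    unfold S
    rw [rad_sq]
    ring_nf
  have hSval : Real.sqrt ((p 0)^2 - (p 1)^2 - (p 2)^2) = S p := by rw [hSfun]
  have HS : HasFDerivAt S ((1 / (2 * S p)) •
      ((((2:ℕ):ℝ) * (p 0)^1) • (ContinuousLinearMap.proj 0 : Pt →L[ℝ] ℝ)
        - (((2:ℕ):ℝ) * (p 1)^1) • (ContinuousLinearMap.proj 1 : Pt →L[ℝ] ℝ)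
        - (((2:ℕ):ℝ) * (p 2)^1) • (ContinuousLinearMap.proj 2 : Pt →L[ℝ] ℝ))) p := by
    have h5 := (Real.hasDerivAt_sqrt hq.ne').comp_hasFDerivAt p HQ
    rw [hSval] at h5
    have h6 : ((fun x => Real.sqrt x) ∘ fun q : Pt => (q 0)^2 - (q 1)^2 - (q 2)^2) = S := by
      funext q
      rw [hSfun]
      rfl
    rwa [h6] at h5
  have H4 : HasFDerivAt (fun q : Pt => (S q)^e)
      (((e : ℝ) * (S p)^(e-1)) • ((1 / (2 * S p)) •
      ((((2:ℕ):ℝ) * (p 0)^1) • (ContinuousLinearMap.proj 0 : Pt →L[ℝ] ℝ)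
        - (((2:ℕ):ℝ) * (p 1)^1) • (ContinuousLinearMap.proj 1 : Pt →L[ℝ] ℝ)
        - (((2:ℕ):ℝ) * (p 2)^1) • (ContinuousLinearMap.proj 2 : Pt →L[ℝ] ℝ)))) p :=
    (hasDerivAt_zpow e (S p) (Or.inl hS.ne')).comp_hasFDerivAt p HS
  have H : HasFDerivAt (teval ⟨k,a,b,c,e⟩) _ p :=
    (((H1.const_mul k).mul H2).mul H3).mul H4
  refine ⟨_, H, ?_⟩
  intro i
  -- zpow rewrites
  have hz1 : (S p)^(e-1) = (S p)^(e-2) * S p := by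
    rw [show e - 1 = e - 2 + 1 by ring, zpow_add_one₀ hS.ne']
  have hz2 : (S p)^e = (S p)^(e-2) * S p * S p := by
    rw [← zpow_add_one₀ hS.ne', ← zpow_add_one₀ hS.ne']
    congr 1; ring
  have hz3 : (p 0)^c = (p 0)^(c-1) * p 0 := by
    rw [← zpow_add_one₀ h0.ne']
    congr 1; ring
  have hz4 : (p 0)^(c+1) = (p 0)^(c-1) * p 0 * p 0 := by
    rw [← zpow_add_one₀ h0.ne', ← zpow_add_one₀ h0.ne']
    congr 1; ring
  fin_cases i <;>
  · simp (config := { decide := true }) only [ContinuousLinearMap.add_apply,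
      ContinuousLinearMap.smul_apply, ContinuousLinearMap.sub_apply,
      ContinuousLinearMap.proj_apply, Pi.single_apply, evalL, tderiv, teval,
      List.map_cons, List.map_nil, List.sum_cons, List.sum_nil, if_true, if_false]
    norm_num [hz1, hz2, hz3, hz4]
    field_simp
    ring


lemma evalL_nil (p : Pt) : evalL [] p = 0 := rfl

lemma evalL_cons (T : Term) (L : List Term) (p : Pt) :
    evalL (T :: L) p = teval T p + evalL L p := by
  simp [evalL]

lemma evalL_append (L1 L2 : List Term) (p : Pt) :
    evalL (L1 ++ L2) p = evalL L1 p + evalL L2 p := by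
  simp [evalL]

lemma evalL_deriv (L : List Term) {p : Pt} (hp : p ∈ coneK) :
    ∃ D : Pt →L[ℝ] ℝ, HasFDerivAt (evalL L) D p ∧
      ∀ i : Fin 3, D (Pi.single i 1) = evalL (L.flatMap (tderiv i)) p := by
  induction L with
  | nil =>
    refine ⟨0, ?_, ?_⟩
    · exact hasFDerivAt_const 0 p
    · intro i; simp [evalL]
  | cons T L ih =>
    obtain ⟨D1, hD1, hi1⟩ := teval_deriv T hp
    obtain ⟨D2, hD2, hi2⟩ := ih
    refine ⟨D1 + D2, ?_, ?_⟩
    · have : HasFDerivAt (fun q => teval T q + evalL L q) (D1 + D2) p := hD1.add hD2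
      have he : (fun q => teval T q + evalL L q) = evalL (T :: L) := by
        funext q; rw [evalL_cons]
      rwa [he] at this
    · intro i
      rw [ContinuousLinearMap.add_apply, hi1 i, hi2 i, List.flatMap_cons, evalL_append]

/-- Representability by a list of good monomial terms on the cone. -/
def RepL (n : ℕ) (f : Pt → ℝ) : Prop :=
  ∃ L : List Term, (∀ T ∈ L, Good n T) ∧ ∀ p ∈ coneK, f p = evalL L p

lemma pd_eq_of_repL {f : Pt → ℝ} (L : List Term)
    (hL : ∀ p ∈ coneK, f p = evalL L p) {p : Pt} (hp : p ∈ coneK) (i : Fin 3) :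
    pd i f p = evalL (L.flatMap (tderiv i)) p := by
  obtain ⟨D, hD, hDi⟩ := evalL_deriv L hp
  have hev : f =ᶠ[nhds p] evalL L :=
    Filter.eventuallyEq_of_mem (isOpen_coneK.mem_nhds hp) hL
  unfold pd
  rw [hev.fderiv_eq, hD.fderiv, hDi]

lemma good_tderiv {n : ℕ} {T : Term} (h : Good n T) (i : Fin 3) :
    ∀ T' ∈ tderiv i T, Good (n+1) T' := by
  intro T' hT'
  fin_cases i <;>
    simp (config := { decide := true }) only [tderiv, List.mem_cons,
      List.not_mem_nil, or_false, if_true, if_false] at hT'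
  · rcases hT' with rfl | rfl
    · rcases h with hk | ⟨h1, h2⟩
      · exact Or.inl (by simp [hk])
      · refine Or.inr ⟨?_, ?_⟩ <;> dsimp only <;> push_cast <;> omega
    · rcases h with hk | ⟨h1, h2⟩
      · exact Or.inl (by simp [hk])
      · refine Or.inr ⟨?_, ?_⟩ <;> dsimp only <;> push_cast <;> omega
  · rcases hT' with rfl | rfl
    · rcases h with hk | ⟨h1, h2⟩
      · exact Or.inl (by simp [hk])
      · rcases Nat.eq_zero_or_pos T.a with ha | ha
        · exact Or.inl (by simp [ha])
        · refine Or.inr ⟨?_, ?_⟩ <;> dsimp only <;> push_cast <;> omega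
    · rcases h with hk | ⟨h1, h2⟩
      · exact Or.inl (by simp [hk])
      · refine Or.inr ⟨?_, ?_⟩ <;> dsimp only <;> push_cast <;> omega
  · rcases hT' with rfl | rfl
    · rcases h with hk | ⟨h1, h2⟩
      · exact Or.inl (by simp [hk])
      · rcases Nat.eq_zero_or_pos T.b with hb | hb
        · exact Or.inl (by simp [hb])
        · refine Or.inr ⟨?_, ?_⟩ <;> dsimp only <;> push_cast <;> omega
    · rcases h with hk | ⟨h1, h2⟩
      · exact Or.inl (by simp [hk])
      · refine Or.inr ⟨?_, ?_⟩ <;> dsimp only <;> push_cast <;> omega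


lemma good_tboost {n : ℕ} {T : Term} (h : Good n T) (a : Fin 2) :
    ∀ T' ∈ tboost a T, Good n T' := by
  intro T' hT'
  fin_cases a <;>
    simp (config := { decide := true }) only [tboost, List.mem_cons,
      List.not_mem_nil, or_false, if_true, if_false] at hT'
  · rcases hT' with rfl | rfl
    · rcases h with hk | ⟨h1, h2⟩
      · exact Or.inl (by simp [hk])
      · refine Or.inr ⟨?_, ?_⟩ <;> dsimp only <;> push_cast <;> omega
    · rcases h with hk | ⟨h1, h2⟩
      · exact Or.inl (by simp [hk])
      · rcases Nat.eq_zero_or_pos T.a with ha | ha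
        · exact Or.inl (by simp [ha])
        · refine Or.inr ⟨?_, ?_⟩ <;> dsimp only <;> push_cast <;> omega
  · rcases hT' with rfl | rfl
    · rcases h with hk | ⟨h1, h2⟩
      · exact Or.inl (by simp [hk])
      · refine Or.inr ⟨?_, ?_⟩ <;> dsimp only <;> push_cast <;> omega
    · rcases h with hk | ⟨h1, h2⟩
      · exact Or.inl (by simp [hk])
      · rcases Nat.eq_zero_or_pos T.b with hb | hb
        · exact Or.inl (by simp [hb])
        · refine Or.inr ⟨?_, ?_⟩ <;> dsimp only <;> push_cast <;> omega

/-- One-term boost identity. -/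
lemma boost_term_eq (a : Fin 2) (T : Term) {p : Pt} (hp : p ∈ coneK) :
    p a.succ * evalL (tderiv 0 T) p + p 0 * evalL (tderiv a.succ T) p
      = evalL (tboost a T) p := by
  obtain ⟨k, A, B, c, e⟩ := T
  have h0 : (0:ℝ) < p 0 := lt_trans one_pos (t_pos hp)
  have hS : 0 < S p := S_pos hp
  have hz3 : (p 0)^c = (p 0)^(c-1) * p 0 := by
    rw [← zpow_add_one₀ h0.ne']
    congr 1; ring
  have hz4 : (p 0)^(c+1) = (p 0)^(c-1) * p 0 * p 0 := by
    rw [← zpow_add_one₀ h0.ne', ← zpow_add_one₀ h0.ne']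
    congr 1; ring
  fin_cases a <;>
  · simp (config := { decide := true }) only [tderiv, tboost, evalL, teval,
      List.map_cons, List.map_nil, List.sum_cons, List.sum_nil, if_true, if_false]
    norm_num [hz3, hz4]
    ring

lemma evalL_boost_flatMap (a : Fin 2) (L : List Term) {p : Pt} (hp : p ∈ coneK) :
    p a.succ * evalL (L.flatMap (tderiv 0)) p + p 0 * evalL (L.flatMap (tderiv a.succ)) p
      = evalL (L.flatMap (tboost a)) p := by
  induction L with
  | nil => simp [evalL]
  | cons T L ih =>
    rw [List.flatMap_cons, List.flatMap_cons, List.flatMap_cons,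
      evalL_append, evalL_append, evalL_append, ← ih, ← boost_term_eq a T hp]
    ring

lemma repL_pd {n : ℕ} {f : Pt → ℝ} (h : RepL n f) (i : Fin 3) :
    RepL (n+1) (pd i f) := by
  obtain ⟨L, hG, hEq⟩ := h
  refine ⟨L.flatMap (tderiv i), ?_, ?_⟩
  · intro T' hT'
    obtain ⟨T, hT, hT'2⟩ := List.mem_flatMap.1 hT'
    exact good_tderiv (hG T hT) i T' hT'2
  · intro p hp
    exact pd_eq_of_repL L hEq hp i

lemma repL_boost {n : ℕ} {f : Pt → ℝ} (h : RepL n f) (a : Fin 2) :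
    RepL n (boost a f) := by
  obtain ⟨L, hG, hEq⟩ := h
  refine ⟨L.flatMap (tboost a), ?_, ?_⟩
  · intro T' hT'
    obtain ⟨T, hT, hT'2⟩ := List.mem_flatMap.1 hT'
    exact good_tboost (hG T hT) a T' hT'2
  · intro p hp
    unfold boost
    rw [pd_eq_of_repL L hEq hp 0, pd_eq_of_repL L hEq hp a.succ]
    exact evalL_boost_flatMap a L hp

lemma repL_sot : RepL 0 sot := by
  refine ⟨[⟨1, 0, 0, -1, 1⟩], ?_, ?_⟩
  · intro T hT
    simp only [List.mem_singleton] at hT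
    subst hT
    right
    constructor <;> simp
  · intro p hp
    have h0 : (0:ℝ) < p 0 := lt_trans one_pos (t_pos hp)
    simp only [evalL, teval, List.map_cons, List.map_nil, List.sum_cons, List.sum_nil]
    unfold sot
    show Real.sqrt ((p 0)^2 - (rad p)^2) / p 0
      = 1 * (p 1)^(0:ℕ) * (p 2)^(0:ℕ) * (p 0)^(-1:ℤ) * (S p)^(1:ℤ) + 0
    unfold S
    rw [zpow_neg_one, zpow_one]
    field_simp
    ring


lemma key0 {t s : ℝ} (ht : 1 ≤ t) (hs : 1 ≤ s) (hst : s ≤ t) {e : ℤ} (he : 1 ≤ e) :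
    t ^ (-e) * s ^ e ≤ s / t := by
  have ht0 : (0:ℝ) < t := lt_of_lt_of_le one_pos ht
  have hs0 : (0:ℝ) < s := lt_of_lt_of_le one_pos hs
  have hq0 : (0:ℝ) < s / t := div_pos hs0 ht0
  have h1 : t ^ (-e) * s ^ e = (s/t)^(e-1) * (s/t) := by
    rw [← zpow_add_one₀ hq0.ne', sub_add_cancel, div_zpow, zpow_neg, div_eq_mul_inv, mul_comm]
  rw [h1]
  have h3 : s / t ≤ 1 := div_le_one_of_le₀ hst ht0.le
  have h2 : (s/t)^(e-1) ≤ 1 := by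
    have h4 : (s/t)^(e-1) = (s/t)^((e-1).toNat) := by
      rw [← zpow_natCast, Int.toNat_of_nonneg (by omega)]
    rw [h4]
    exact pow_le_one₀ hq0.le h3
  nlinarith

lemma zpow_le_one_aux {t : ℝ} (ht : 1 ≤ t) {m : ℤ} (hm : m ≤ 0) : t ^ m ≤ 1 := by
  have := zpow_le_zpow_right₀ ht hm
  simpa using this

lemma keyn {t s : ℝ} (ht : 1 ≤ t) (hs : 1 ≤ s) (hst : s ≤ t) (hts : t ≤ s^2)
    {n : ℕ} (hn : 1 ≤ n) {e : ℤ} (he : 1 - 2*(n:ℤ) ≤ e) :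
    t ^ (-(n:ℤ) - e) * s ^ e ≤ 1 / s := by
  have ht0 : (0:ℝ) < t := lt_of_lt_of_le one_pos ht
  have hs0 : (0:ℝ) < s := lt_of_lt_of_le one_pos hs
  have hinv : (1:ℝ)/t ≤ 1/s := by
    apply one_div_le_one_div_of_le hs0 hst
  rcases le_or_gt 0 e with hpos | hneg
  · have hse : s ^ e ≤ t ^ e := by
      lift e to ℕ using hpos
      rw [zpow_natCast, zpow_natCast]
      exact pow_le_pow_left₀ hs0.le hst _
    calc t ^ (-(n:ℤ) - e) * s ^ e
        ≤ t ^ (-(n:ℤ) - e) * t ^ e :=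
          mul_le_mul_of_nonneg_left hse (by positivity)
      _ = t ^ (-(n:ℤ)) := by rw [← zpow_add₀ ht0.ne']; congr 1; ring
      _ ≤ t ^ (-1:ℤ) := zpow_le_zpow_right₀ ht (by omega)
      _ = 1/t := by rw [zpow_neg_one, one_div]
      _ ≤ 1/s := hinv
  · rcases le_or_gt (-(n:ℤ) - e) 0 with hm | hm
    · calc t ^ (-(n:ℤ) - e) * s ^ e
          ≤ 1 * s ^ e := mul_le_mul_of_nonneg_right (zpow_le_one_aux ht hm) (by positivity)
        _ = s ^ e := one_mul _
        _ ≤ s ^ (-1:ℤ) := zpow_le_zpow_right₀ hs (by omega)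
        _ = 1/s := by rw [zpow_neg_one, one_div]
    · have hm' : (0:ℤ) ≤ -(n:ℤ) - e := hm.le
      have h1 : t ^ (-(n:ℤ) - e) ≤ (s^2) ^ (-(n:ℤ) - e) := by
        lift (-(n:ℤ) - e) to ℕ using hm' with m hmm
        rw [zpow_natCast, zpow_natCast]
        exact pow_le_pow_left₀ ht0.le hts _
      have h2 : (s^2 : ℝ) ^ (-(n:ℤ) - e) = s ^ (2 * (-(n:ℤ) - e)) := by
        rw [← zpow_natCast s 2, ← zpow_mul]
        norm_num
      calc t ^ (-(n:ℤ) - e) * s ^ e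
          ≤ (s^2) ^ (-(n:ℤ) - e) * s ^ e :=
            mul_le_mul_of_nonneg_right h1 (by positivity)
        _ = s ^ (2 * (-(n:ℤ) - e) + e) := by rw [h2, ← zpow_add₀ hs0.ne']
        _ ≤ s ^ (-1:ℤ) := zpow_le_zpow_right₀ hs (by omega)
        _ = 1/s := by rw [zpow_neg_one, one_div]

/-- Absolute value of a term, reduced to the pure power bound. -/
lemma abs_teval_le {T : Term} {p : Pt} (hp : p ∈ coneK) (n : ℕ) (hT : Good n T) :
    |teval T p| ≤ |T.k| * ((p 0) ^ (-(n:ℤ) - T.e) * (S p) ^ T.e) := by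
  have h0 : (0:ℝ) < p 0 := lt_trans one_pos (t_pos hp)
  have hS : 0 < S p := S_pos hp
  rcases hT with hk | ⟨h1, h2⟩
  · simp [teval, hk]
  · have habs : |teval T p|
        = |T.k| * |p 1| ^ T.a * |p 2| ^ T.b * (p 0) ^ T.c * (S p) ^ T.e := by
      unfold teval
      rw [abs_mul, abs_mul, abs_mul, abs_mul, abs_pow, abs_pow,
        abs_of_pos (zpow_pos h0 _), abs_of_pos (zpow_pos hS _)]
    rw [habs]
    have hx1 : |p 1| ^ T.a ≤ (p 0) ^ T.a := pow_le_pow_left₀ (abs_nonneg _) (abs_x1_le hp) _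
    have hx2 : |p 2| ^ T.b ≤ (p 0) ^ T.b := pow_le_pow_left₀ (abs_nonneg _) (abs_x2_le hp) _
    have hcomb : |p 1| ^ T.a * |p 2| ^ T.b * (p 0) ^ T.c
        ≤ (p 0) ^ T.a * (p 0) ^ T.b * (p 0) ^ T.c := by
      have hc : (0:ℝ) < (p 0) ^ T.c := zpow_pos h0 _
      have := mul_le_mul hx1 hx2 (by positivity) (by positivity)
      exact mul_le_mul_of_nonneg_right this hc.le
    have heq : (p 0) ^ T.a * (p 0) ^ T.b * (p 0) ^ T.c = (p 0) ^ (-(n:ℤ) - T.e) := by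
      rw [← zpow_natCast (p 0) T.a, ← zpow_natCast (p 0) T.b, ← zpow_add₀ h0.ne',
        ← zpow_add₀ h0.ne']
      congr 1
      omega
    calc |T.k| * |p 1| ^ T.a * |p 2| ^ T.b * (p 0) ^ T.c * (S p) ^ T.e
        = |T.k| * ((|p 1| ^ T.a * |p 2| ^ T.b * (p 0) ^ T.c) * (S p) ^ T.e) := by ring
      _ ≤ |T.k| * (((p 0) ^ T.a * (p 0) ^ T.b * (p 0) ^ T.c) * (S p) ^ T.e) := by
          apply mul_le_mul_of_nonneg_left _ (abs_nonneg _)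
          exact mul_le_mul_of_nonneg_right hcomb (by positivity)
      _ = |T.k| * ((p 0) ^ (-(n:ℤ) - T.e) * (S p) ^ T.e) := by rw [heq]

lemma abs_teval_le0 {T : Term} {p : Pt} (hp : p ∈ coneK) (hT : Good 0 T) :
    |teval T p| ≤ |T.k| * (S p / p 0) := by
  have h0 : (0:ℝ) < p 0 := lt_trans one_pos (t_pos hp)
  rcases hT with hk | ⟨h1, h2⟩
  · simp [teval, hk]
  · refine le_trans (abs_teval_le hp 0 (Or.inr ⟨h1, h2⟩)) ?_
    apply mul_le_mul_of_nonneg_left _ (abs_nonneg _)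
    have : (-(0:ℕ):ℤ) - T.e = -T.e := by omega
    rw [this]
    exact key0 (t_pos hp).le (one_le_S hp) (S_le_t hp) (by simpa using h2)

lemma abs_teval_len {T : Term} {p : Pt} (hp : p ∈ coneK) {n : ℕ} (hn : 1 ≤ n)
    (hT : Good n T) :
    |teval T p| ≤ |T.k| * (1 / S p) := by
  have h0 : (0:ℝ) < p 0 := lt_trans one_pos (t_pos hp)
  have hS := S_pos hp
  rcases hT with hk | ⟨h1, h2⟩
  · simp [teval, hk]
  · refine le_trans (abs_teval_le hp n (Or.inr ⟨h1, h2⟩)) ?_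
    apply mul_le_mul_of_nonneg_left _ (abs_nonneg _)
    exact keyn (t_pos hp).le (one_le_S hp) (S_le_t hp) (t_le_S_sq hp) hn h2

def normSum (L : List Term) : ℝ := (L.map (fun T => |T.k|)).sum

lemma normSum_nonneg (L : List Term) : 0 ≤ normSum L := by
  induction L with
  | nil => simp [normSum]
  | cons T L ih =>
    simp only [normSum, List.map_cons, List.sum_cons]
    have := abs_nonneg T.k
    simp only [normSum] at ih
    linarith

lemma abs_evalL_le {L : List Term} {p : Pt} {B : ℝ} (hB : 0 ≤ B)
    (h : ∀ T ∈ L, |teval T p| ≤ |T.k| * B) :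
    |evalL L p| ≤ normSum L * B := by
  induction L with
  | nil => simp [evalL, normSum]
  | cons T L ih =>
    rw [evalL_cons]
    refine le_trans (abs_add_le _ _) ?_
    have h1 := h T (List.mem_cons_self (a := T) (l := L))
    have h2 := ih fun T' hT' => h T' (List.mem_cons_of_mem T hT')
    simp only [normSum, List.map_cons, List.sum_cons] at *
    calc |teval T p| + |evalL L p| ≤ |T.k| * B + normSum L * B := by
          apply add_le_add h1
          simpa [normSum] using h2
      _ = (|T.k| + normSum L) * B := by ring
      _ = (|T.k| + (L.map (fun T => |T.k|)).sum) * B := by simp [normSum]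

lemma repL_boostSeq (J : List (Fin 2)) : RepL 0 (boostSeq J sot) := by
  induction J with
  | nil => exact repL_sot
  | cons a J ih => exact repL_boost ih a

lemma repL_pdSeq (I : List (Fin 3)) (J : List (Fin 2)) :
    RepL I.length (pdSeq I (boostSeq J sot)) := by
  induction I with
  | nil => exact repL_boostSeq J
  | cons i I ih => exact repL_pd ih i

end SotAux

open SotAux in
/-- **Derivatives of `s/t` in the cone** (Lemma 4.6). In `K`,
`|∂^I L^J (s/t)| ≤ C (s/t)` if `|I| = 0` and `|∂^I L^J (s/t)| ≤ C s^{−1}` if `|I| > 0`. -/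
theorem sot_derivative_estimate (I : List (Fin 3)) (J : List (Fin 2)) :
    ∃ C : ℝ, 0 < C ∧ ∀ p ∈ coneK,
      (I.length = 0 → |boostSeq J sot p| ≤ C * sot p) ∧
      (0 < I.length →
        |pdSeq I (boostSeq J sot) p| ≤ C / Real.sqrt ((p 0)^2 - (rad p)^2)) := by
  obtain ⟨L0, hG0, hEq0⟩ := repL_boostSeq J
  obtain ⟨L1, hG1, hEq1⟩ := repL_pdSeq I J
  refine ⟨1 + normSum L0 + normSum L1, ?_, ?_⟩
  · have := normSum_nonneg L0
    have := normSum_nonneg L1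
    linarith
  · intro p hp
    have h0 : (0:ℝ) < p 0 := lt_trans one_pos (t_pos hp)
    have hS : 0 < S p := S_pos hp
    have hC0 : normSum L0 ≤ 1 + normSum L0 + normSum L1 := by
      have := normSum_nonneg L1; linarith
    have hC1 : normSum L1 ≤ 1 + normSum L0 + normSum L1 := by
      have := normSum_nonneg L0; linarith
    constructor
    · intro _
      rw [hEq0 p hp]
      have h1 : |evalL L0 p| ≤ normSum L0 * (S p / p 0) :=
        abs_evalL_le (by positivity) (fun T hT => abs_teval_le0 hp (hG0 T hT))
      have h2 : sot p = S p / p 0 := rfl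
      rw [h2]
      refine le_trans h1 ?_
      exact mul_le_mul_of_nonneg_right hC0 (by positivity)
    · intro hlen
      rw [hEq1 p hp]
      have h1 : |evalL L1 p| ≤ normSum L1 * (1 / S p) :=
        abs_evalL_le (by positivity)
          (fun T hT => abs_teval_len hp hlen (hG1 T hT))
      have h2 : Real.sqrt ((p 0)^2 - (rad p)^2) = S p := rfl
      rw [h2]
      refine le_trans h1 ?_
      rw [div_eq_mul_one_div (1 + normSum L0 + normSum L1) (S p)]
      exact mul_le_mul_of_nonneg_right hC1 (by positivity)
end
end

section
/- Klainerman–Sobolev estimate on hyperboloids. There exists a universal constant C > 0 such that for every smooth function φ supported in the cone K and every s ≥ 2: sup_{(t,x) ∈ H_s} |t φ(t, x)| ≤ C Σ_{|J| ≤ 2} ‖L^J φ‖_{L²_f(H_s)}, where the sum runs over all finite sequences J of indices in {1,2} of length at most 2. -/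
noncomputable section

open MeasureTheory

namespace KS

def T (s : ℝ) (x : Fin 2 → ℝ) : ℝ := Real.sqrt (s^2 + (x 0)^2 + (x 1)^2)

lemma q_pos {s : ℝ} (hs : 2 ≤ s) (x : Fin 2 → ℝ) : 0 < s^2 + (x 0)^2 + (x 1)^2 := by
  nlinarith [sq_nonneg (x 0), sq_nonneg (x 1)]

lemma T_pos {s : ℝ} (hs : 2 ≤ s) (x : Fin 2 → ℝ) : 0 < T s x :=
  Real.sqrt_pos.mpr (q_pos hs x)

lemma T_sq {s : ℝ} (hs : 2 ≤ s) (x : Fin 2 → ℝ) : (T s x)^2 = s^2 + (x 0)^2 + (x 1)^2 :=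
  Real.sq_sqrt (q_pos hs x).le

lemma abs_le_T {s : ℝ} (hs : 2 ≤ s) (x : Fin 2 → ℝ) (a : Fin 2) : |x a| ≤ T s x := by
  have h := T_sq hs x
  have h2 : (x a)^2 ≤ (T s x)^2 := by
    fin_cases a <;> simp at h ⊢ <;> nlinarith
  calc |x a| = Real.sqrt ((x a)^2) := (Real.sqrt_sq_eq_abs _).symm
    _ ≤ Real.sqrt ((T s x)^2) := Real.sqrt_le_sqrt h2
    _ = T s x := Real.sqrt_sq (T_pos hs x).le

lemma hyp_zero (s : ℝ) (x : Fin 2 → ℝ) : hyp s x 0 = T s x := rfl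

-- derivative of t-component along first coordinate
lemma hasDerivAt_T0 {s : ℝ} (hs : 2 ≤ s) (a b : ℝ) :
    HasDerivAt (fun y => T s ![y, b]) (a / T s ![a, b]) a := by
  have h1 : HasDerivAt (fun y : ℝ => s^2 + y^2 + b^2) (2*a) a := by
    simpa using (((hasDerivAt_pow 2 a).const_add (s^2)).add_const (b^2))
  have h2 := h1.sqrt (by have := q_pos hs ![a,b]; simp at this ⊢; nlinarith)
  have hT : T s ![a,b] = Real.sqrt (s^2+a^2+b^2) := by simp [T]
  have hfun : (fun y => T s ![y, b]) = fun y => Real.sqrt (s^2+y^2+b^2) := by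
    funext y; simp [T]
  rw [hfun, hT, show a / Real.sqrt (s^2+a^2+b^2) = 2*a / (2*Real.sqrt (s^2+a^2+b^2)) by
    rw [mul_div_mul_left _ _ (two_ne_zero)]]
  exact h2

lemma hasDerivAt_T1 {s : ℝ} (hs : 2 ≤ s) (a b : ℝ) :
    HasDerivAt (fun y => T s ![a, y]) (b / T s ![a, b]) b := by
  have h1 : HasDerivAt (fun y : ℝ => s^2 + a^2 + y^2) (2*b) b := by
    simpa using ((hasDerivAt_pow 2 b).const_add (s^2 + a^2))
  have h2 := h1.sqrt (by have := q_pos hs ![a,b]; simp at this ⊢; nlinarith)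
  have hT : T s ![a,b] = Real.sqrt (s^2+a^2+b^2) := by simp [T]
  have hfun : (fun y => T s ![a, y]) = fun y => Real.sqrt (s^2+a^2+y^2) := by
    funext y; simp [T]
  rw [hfun, hT, show b / Real.sqrt (s^2+a^2+b^2) = 2*b / (2*Real.sqrt (s^2+a^2+b^2)) by
    rw [mul_div_mul_left _ _ (two_ne_zero)]]
  exact h2

-- curve derivative: γ0 y = hyp s ![y,b]
lemma hasDerivAt_hyp0 {s : ℝ} (hs : 2 ≤ s) (a b : ℝ) :
    HasDerivAt (fun y => hyp s ![y, b])
      ((a / T s ![a,b]) • (Pi.single (0 : Fin 3) 1 : Pt) + (Pi.single (1 : Fin 3) 1 : Pt)) a := by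
  rw [hasDerivAt_pi]
  intro i
  fin_cases i
  · simpa [hyp, hyp_zero, T, Pi.single_apply] using hasDerivAt_T0 hs a b
  · simpa [hyp, Pi.single_apply] using (hasDerivAt_id' a)
  · simpa [hyp, Pi.single_apply] using (hasDerivAt_const a b)

lemma hasDerivAt_hyp1 {s : ℝ} (hs : 2 ≤ s) (a b : ℝ) :
    HasDerivAt (fun y => hyp s ![a, y])
      ((b / T s ![a,b]) • (Pi.single (0 : Fin 3) 1 : Pt) + (Pi.single (2 : Fin 3) 1 : Pt)) b := by
  rw [hasDerivAt_pi]
  intro i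
  fin_cases i
  · simpa [hyp, hyp_zero, T, Pi.single_apply] using hasDerivAt_T1 hs a b
  · simpa [hyp, Pi.single_apply] using (hasDerivAt_const b a)
  · simpa [hyp, Pi.single_apply] using (hasDerivAt_id' b)

-- key composition lemmas
lemma key0 {s : ℝ} (hs : 2 ≤ s) {ξ : Pt → ℝ} (hξ : Differentiable ℝ ξ) (a b : ℝ) :
    HasDerivAt (fun y => ξ (hyp s ![y, b]))
      (boost 0 ξ (hyp s ![a,b]) / T s ![a,b]) a := by
  have hc := (hξ.differentiableAt.hasFDerivAt (x := hyp s ![a,b])).comp_hasDerivAt a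
    (hasDerivAt_hyp0 hs a b)
  refine hc.congr_deriv (Eq.symm ?_)
  have hT := (T_pos hs ![a,b]).ne'
  simp only [map_add, ContinuousLinearMap.map_smul, boost, pd, smul_eq_mul]
  have h1 : hyp s ![a,b] (0:Fin 2).succ = a := by simp [hyp]
  have h0 : hyp s ![a,b] 0 = T s ![a,b] := rfl
  rw [h1, h0]
  show (a * _ + T s ![a,b] * _) / T s ![a,b] = _
  field_simp
  simp only [Fin.succ_zero_eq_one]

lemma key1 {s : ℝ} (hs : 2 ≤ s) {ξ : Pt → ℝ} (hξ : Differentiable ℝ ξ) (a b : ℝ) :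
    HasDerivAt (fun y => ξ (hyp s ![a, y]))
      (boost 1 ξ (hyp s ![a,b]) / T s ![a,b]) b := by
  have hc := (hξ.differentiableAt.hasFDerivAt (x := hyp s ![a,b])).comp_hasDerivAt b
    (hasDerivAt_hyp1 hs a b)
  refine hc.congr_deriv (Eq.symm ?_)
  have hT := (T_pos hs ![a,b]).ne'
  simp only [map_add, ContinuousLinearMap.map_smul, boost, pd, smul_eq_mul]
  have h1 : hyp s ![a,b] (1:Fin 2).succ = b := by simp [hyp]
  have h0 : hyp s ![a,b] 0 = T s ![a,b] := rfl
  rw [h1, h0]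
  show (b * _ + T s ![a,b] * _) / T s ![a,b] = _
  field_simp
  simp only [Fin.succ_one_eq_two]



lemma pd_contDiff {ξ : Pt → ℝ} (hξ : ContDiff ℝ (⊤ : ℕ∞) ξ) (i : Fin 3) :
    ContDiff ℝ (⊤ : ℕ∞) (pd i ξ) := by
  have h1 : ContDiff ℝ (⊤ : ℕ∞) (fun p => fderiv ℝ ξ p) := hξ.fderiv_right (by norm_cast)
  exact h1.clm_apply contDiff_const

lemma coord_contDiff (i : Fin 3) : ContDiff ℝ (⊤ : ℕ∞) (fun p : Pt => p i) :=
  (ContinuousLinearMap.proj i : Pt →L[ℝ] ℝ).contDiff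

lemma boost_contDiff {ξ : Pt → ℝ} (hξ : ContDiff ℝ (⊤ : ℕ∞) ξ) (a : Fin 2) :
    ContDiff ℝ (⊤ : ℕ∞) (boost a ξ) :=
  ((coord_contDiff a.succ).mul (pd_contDiff hξ 0)).add
    ((coord_contDiff 0).mul (pd_contDiff hξ a.succ))


variable {s : ℝ} {φ : Pt → ℝ}

def g (s : ℝ) (φ : Pt → ℝ) (x : Fin 2 → ℝ) : ℝ := (T s x * φ (hyp s x))^2

def A (s : ℝ) (φ : Pt → ℝ) (x : Fin 2 → ℝ) : ℝ :=
  2 * x 0 * (φ (hyp s x))^2 + 2 * T s x * φ (hyp s x) * boost 0 φ (hyp s x)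

def Bf (s : ℝ) (φ : Pt → ℝ) (x : Fin 2 → ℝ) : ℝ :=
  4 * (x 0 / T s x) * φ (hyp s x) * boost 1 φ (hyp s x)
    + 2 * (x 1 / T s x) * φ (hyp s x) * boost 0 φ (hyp s x)
    + 2 * boost 1 φ (hyp s x) * boost 0 φ (hyp s x)
    + 2 * φ (hyp s x) * boost 1 (boost 0 φ) (hyp s x)

lemma hasDerivAt_g (hs : 2 ≤ s) (hφ : Differentiable ℝ φ) (a b : ℝ) :
    HasDerivAt (fun y => g s φ ![y, b]) (A s φ ![a, b]) a := by
  have hT := hasDerivAt_T0 hs a b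
  have hΨ := key0 hs hφ a b
  have h := (hT.mul hΨ).pow 2
  refine h.congr_deriv (Eq.symm ?_)
  have hTne := (T_pos hs ![a,b]).ne'
  simp only [A]
  field_simp
  simp only [Pi.mul_apply, Matrix.cons_val_zero]
  ring

lemma hasDerivAt_A (hs : 2 ≤ s) (hφ : ContDiff ℝ (⊤ : ℕ∞) φ) (a b : ℝ) :
    HasDerivAt (fun y => A s φ ![a, y]) (Bf s φ ![a, b]) b := by
  have hT := hasDerivAt_T1 hs a b
  have hΨ := key1 hs (hφ.differentiable (by norm_cast)) a b
  have hB0 := key1 hs (((boost_contDiff hφ 0).differentiable (by norm_cast))) a b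
  have h1 : HasDerivAt (fun y => 2 * (![a,y] 0) * (φ (hyp s ![a,y]))^2)
      (2 * a * (2 * φ (hyp s ![a,b]) * (boost 1 φ (hyp s ![a,b]) / T s ![a,b]))) b := by
    simpa using ((hΨ.pow 2).const_mul (2 * a))
  have h2 : HasDerivAt (fun y => 2 * T s ![a,y] * φ (hyp s ![a,y]) * boost 0 φ (hyp s ![a,y]))
      (((2 * (b / T s ![a,b])) * φ (hyp s ![a,b])
          + 2 * T s ![a,b] * (boost 1 φ (hyp s ![a,b]) / T s ![a,b])) * boost 0 φ (hyp s ![a,b])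
        + 2 * T s ![a,b] * φ (hyp s ![a,b]) * (boost 1 (boost 0 φ) (hyp s ![a,b]) / T s ![a,b]))
      b := by
    exact (((hT.const_mul 2).mul hΨ).mul hB0)
  have h := h1.add h2
  refine h.congr_deriv (Eq.symm ?_)
  have hTne := (T_pos hs ![a,b]).ne'
  simp only [Bf]
  have e0 : (![a,b] : Fin 2 → ℝ) 0 = a := rfl
  have e1 : (![a,b] : Fin 2 → ℝ) 1 = b := rfl
  rw [e0, e1]
  field_simp
  ring

def U : Set Pt := {p | p 0 - 1 < rad p}

lemma U_open : IsOpen U := by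
  have h1 : Continuous (fun p : Pt => p 0 - 1) := (continuous_apply 0).sub continuous_const
  have h2 : Continuous rad := (((continuous_apply (1:Fin 3)).pow 2).add
    ((continuous_apply (2:Fin 3)).pow 2)).sqrt
  exact isOpen_lt h1 h2

lemma vanish_boost {ξ : Pt → ℝ} (h : ∀ p ∈ U, ξ p = 0) (a : Fin 2) :
    ∀ p ∈ U, boost a ξ p = 0 := by
  intro p hp
  have hev : ξ =ᶠ[nhds p] (fun _ => (0:ℝ)) :=
    Filter.eventuallyEq_of_mem (U_open.mem_nhds hp) h
  have hfd : fderiv ℝ ξ p = fderiv ℝ (fun _ => (0:ℝ)) p := hev.fderiv_eq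
  simp [boost, pd, hfd]

lemma mem_U (hs : 2 ≤ s) (x : Fin 2 → ℝ) (hx : s^2 ≤ |x 0| ∨ s^2 ≤ |x 1|) :
    hyp s x ∈ U := by
  have hr2 : s^4 ≤ (x 0)^2 + (x 1)^2 := by
    rcases hx with h | h
    · nlinarith [sq_abs (x 0), sq_nonneg (x 1), abs_nonneg (x 0)]
    · nlinarith [sq_abs (x 1), sq_nonneg (x 0), abs_nonneg (x 1)]
  have hrad : rad (hyp s x) = Real.sqrt ((x 0)^2 + (x 1)^2) := by
    simp [rad, hyp]
  have hr : s^2 ≤ Real.sqrt ((x 0)^2 + (x 1)^2) := by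
    have : s^2 = Real.sqrt ((s^2)^2) := (Real.sqrt_sq (by positivity)).symm
    rw [this]
    apply Real.sqrt_le_sqrt
    nlinarith
  show hyp s x 0 - 1 < rad (hyp s x)
  rw [hrad, hyp_zero]
  have hlt : s^2 + (x 0)^2 + (x 1)^2 < (Real.sqrt ((x 0)^2 + (x 1)^2) + 1)^2 := by
    have h0 : 0 ≤ Real.sqrt ((x 0)^2 + (x 1)^2) := Real.sqrt_nonneg _
    have hsq : (Real.sqrt ((x 0)^2 + (x 1)^2))^2 = (x 0)^2 + (x 1)^2 :=
      Real.sq_sqrt (by positivity)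
    nlinarith
  have := (Real.sqrt_lt' (by positivity : (0:ℝ) < Real.sqrt ((x 0)^2 + (x 1)^2) + 1)).mpr hlt
  unfold T
  linarith [this]

lemma hyp_continuous (s : ℝ) : Continuous (hyp s) := by
  apply continuous_pi
  intro i
  fin_cases i
  · exact (((continuous_const.add ((continuous_apply 0).pow 2)).add
      ((continuous_apply 1).pow 2))).sqrt
  · exact continuous_apply 0
  · exact continuous_apply 1

lemma T_continuous (s : ℝ) : Continuous (T s) :=
  ((continuous_const.add ((continuous_apply 0).pow 2)).add
      ((continuous_apply 1).pow 2)).sqrt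

-- one–dimensional FTC bound
lemma oneD {F G : ℝ → ℝ} (hFG : ∀ y, HasDerivAt F (G y) y) (hG : Continuous G)
    (hGi : Integrable G) {M : ℝ} (hF0 : ∀ y, M ≤ y → F y = 0) (c : ℝ) :
    |F c| ≤ ∫ y, |G y| := by
  set M' := max c M with hM'
  have hcM : c ≤ M' := le_max_left _ _
  have hFM : F M' = 0 := hF0 _ (le_max_right _ _)
  have hftc : ∫ y in c..M', G y = F M' - F c :=
    intervalIntegral.integral_eq_sub_of_hasDerivAt (fun y _ => hFG y)
      (hG.intervalIntegrable _ _)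
  have h1 : |F c| = |∫ y in c..M', G y| := by rw [hftc, hFM]; rw [abs_sub_comm]; simp
  rw [h1]
  calc |∫ y in c..M', G y| ≤ ∫ y in c..M', |G y| :=
        intervalIntegral.abs_integral_le_integral_abs hcM
    _ = ∫ y in Set.Ioc c M', |G y| := by
        rw [intervalIntegral.integral_of_le hcM]
    _ ≤ ∫ y, |G y| := setIntegral_le_integral hGi.abs
        (Filter.Eventually.of_forall fun y => abs_nonneg _)

-- compact support helpers
lemma hcs_plane {f : (Fin 2 → ℝ) → ℝ} (hs : 2 ≤ s)
    (h0 : ∀ x : Fin 2 → ℝ, (s^2 ≤ |x 0| ∨ s^2 ≤ |x 1|) → f x = 0) :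
    HasCompactSupport f := by
  apply HasCompactSupport.intro (K := Metric.closedBall 0 (s^2)) (isCompact_closedBall _ _)
  intro x hx
  apply h0
  by_contra hc
  push_neg at hc
  apply hx
  rw [Metric.mem_closedBall, dist_zero_right]
  apply pi_norm_le_iff_of_nonneg (by positivity) |>.mpr
  intro i
  fin_cases i
  · exact (hc.1).le
  · exact (hc.2).le

lemma hcs_line {f : ℝ → ℝ} (hs : 2 ≤ s) (h0 : ∀ y : ℝ, s^2 ≤ |y| → f y = 0) :
    HasCompactSupport f := by
  apply HasCompactSupport.intro (K := Metric.closedBall 0 (s^2)) (isCompact_closedBall _ _)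
  intro y hy
  apply h0
  rw [Metric.mem_closedBall, dist_zero_right, Real.norm_eq_abs, not_le] at hy
  exact hy.le

-- Cauchy–Schwarz
lemma cs2 {f h : (Fin 2 → ℝ) → ℝ} (cf : Continuous f) (ch : Continuous h)
    (sf : HasCompactSupport f) (sh : HasCompactSupport h) :
    ∫ x, |f x * h x| ≤ Real.sqrt (∫ x, (f x)^2) * Real.sqrt (∫ x, (h x)^2) := by
  have hconj : Real.HolderConjugate 2 2 := Real.HolderConjugate.two_two
  have mf : MemLp f (ENNReal.ofReal 2) volume := by
    rw [show ENNReal.ofReal 2 = 2 by simp]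
    exact cf.memLp_of_hasCompactSupport sf
  have mh : MemLp h (ENNReal.ofReal 2) volume := by
    rw [show ENNReal.ofReal 2 = 2 by simp]
    exact ch.memLp_of_hasCompactSupport sh
  have key := integral_mul_le_Lp_mul_Lq_of_nonneg hconj
    (f := fun x => |f x|) (g := fun x => |h x|)
    (Filter.Eventually.of_forall fun x => abs_nonneg _)
    (Filter.Eventually.of_forall fun x => abs_nonneg _)
    (mf.norm) (mh.norm)
  have e1 : ∀ u : ℝ, |u| ^ (2:ℝ) = u ^ 2 := by
    intro u
    rw [show (2:ℝ) = ((2:ℕ):ℝ) by norm_num, Real.rpow_natCast, sq_abs]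
  calc ∫ x, |f x * h x| = ∫ x, |f x| * |h x| := by simp [abs_mul]
    _ ≤ (∫ x, |f x| ^ (2:ℝ)) ^ (1/(2:ℝ)) * (∫ x, |h x| ^ (2:ℝ)) ^ (1/(2:ℝ)) := key
    _ = Real.sqrt (∫ x, (f x)^2) * Real.sqrt (∫ x, (h x)^2) := by
        simp only [e1]
        rw [Real.sqrt_eq_rpow, Real.sqrt_eq_rpow]

lemma cline0 (b : ℝ) : Continuous fun y : ℝ => (![y, b] : Fin 2 → ℝ) := by
  apply continuous_pi; intro i; fin_cases i
  · simpa using continuous_id'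
  · simpa using continuous_const

lemma cline1 (a : ℝ) : Continuous fun y : ℝ => (![a, y] : Fin 2 → ℝ) := by
  apply continuous_pi; intro i; fin_cases i
  · simpa using continuous_const
  · simpa using continuous_id'

lemma main_bound (hs : 2 ≤ s) (hφ : ContDiff ℝ (⊤ : ℕ∞) φ)
    (hsupp : ∀ p ∈ U, φ p = 0) (a b : ℝ) :
    g s φ ![a, b] ≤ ∫ x : Fin 2 → ℝ, |Bf s φ x| := by
  have hB0U : ∀ p ∈ U, boost 0 φ p = 0 := vanish_boost hsupp 0
  have hB1U : ∀ p ∈ U, boost 1 φ p = 0 := vanish_boost hsupp 1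
  have hB10U : ∀ p ∈ U, boost 1 (boost 0 φ) p = 0 := vanish_boost hB0U 1
  -- vanishing of composed functions at large x
  have hz : ∀ x : Fin 2 → ℝ, (s^2 ≤ |x 0| ∨ s^2 ≤ |x 1|) →
      φ (hyp s x) = 0 ∧ boost 0 φ (hyp s x) = 0 ∧ boost 1 φ (hyp s x) = 0 ∧
        boost 1 (boost 0 φ) (hyp s x) = 0 := fun x hx =>
    ⟨hsupp _ (mem_U hs x hx), hB0U _ (mem_U hs x hx), hB1U _ (mem_U hs x hx),
      hB10U _ (mem_U hs x hx)⟩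
  have hgz : ∀ x : Fin 2 → ℝ, (s^2 ≤ |x 0| ∨ s^2 ≤ |x 1|) → g s φ x = 0 := by
    intro x hx; simp [g, (hz x hx).1]
  have hAz : ∀ x : Fin 2 → ℝ, (s^2 ≤ |x 0| ∨ s^2 ≤ |x 1|) → A s φ x = 0 := by
    intro x hx; simp [A, (hz x hx).1]
  have hBz : ∀ x : Fin 2 → ℝ, (s^2 ≤ |x 0| ∨ s^2 ≤ |x 1|) → Bf s φ x = 0 := by
    intro x hx; simp [Bf, (hz x hx).1, (hz x hx).2.2.1]
  -- continuity
  have cΨ : Continuous (fun x => φ (hyp s x)) := hφ.continuous.comp (hyp_continuous s)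
  have cB0 : Continuous (fun x => boost 0 φ (hyp s x)) :=
    ((boost_contDiff hφ 0).continuous).comp (hyp_continuous s)
  have cB1 : Continuous (fun x => boost 1 φ (hyp s x)) :=
    ((boost_contDiff hφ 1).continuous).comp (hyp_continuous s)
  have cB10 : Continuous (fun x => boost 1 (boost 0 φ) (hyp s x)) :=
    ((boost_contDiff (boost_contDiff hφ 0) 1).continuous).comp (hyp_continuous s)
  have cT : Continuous (T s) := T_continuous s
  have cTne : ∀ x : Fin 2 → ℝ, T s x ≠ 0 := fun x => (T_pos hs x).ne'
  have cA : Continuous (A s φ) := by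
    apply Continuous.add
    · exact (continuous_const.mul (continuous_apply 0)).mul (cΨ.pow 2)
    · exact ((continuous_const.mul cT).mul cΨ).mul cB0
  have cB : Continuous (Bf s φ) := by
    apply Continuous.add
    apply Continuous.add
    apply Continuous.add
    · exact ((continuous_const.mul ((continuous_apply 0).div cT cTne)).mul cΨ).mul cB1
    · exact ((continuous_const.mul ((continuous_apply 1).div cT cTne)).mul cΨ).mul cB0
    · exact (continuous_const.mul cB1).mul cB0
    · exact (continuous_const.mul cΨ).mul cB10
  -- integrability on the plane
  have iB : Integrable (fun x : Fin 2 → ℝ => |Bf s φ x|) volume :=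
    (cB.integrable_of_hasCompactSupport (hcs_plane hs hBz)).abs
  -- transfer to ℝ × ℝ
  set e : (Fin 2 → ℝ) ≃ᵐ ℝ × ℝ := MeasurableEquiv.finTwoArrow with he
  have mp : MeasurePreserving e volume volume := volume_preserving_finTwoArrow ℝ
  have hesymm : ∀ z : ℝ × ℝ, e.symm z = ![z.1, z.2] := by
    intro z; rfl
  have iBP : Integrable (fun z : ℝ × ℝ => |Bf s φ ![z.1, z.2]|) volume := by
    have := (mp.symm e).integrable_comp_emb e.symm.measurableEmbedding
      (g := fun x : Fin 2 → ℝ => |Bf s φ x|)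
    rw [show ((fun x : Fin 2 → ℝ => |Bf s φ x|) ∘ e.symm)
        = fun z : ℝ × ℝ => |Bf s φ ![z.1, z.2]| from funext fun z => by rw [Function.comp_apply, hesymm]] at this
    exact this.mpr iB
  have iBmarg : Integrable (fun y : ℝ => ∫ z : ℝ, |Bf s φ ![y, z]|) volume := by
    have h2 : Integrable (fun z : ℝ × ℝ => |Bf s φ ![z.1, z.2]|) ((volume : Measure ℝ).prod volume) := by
      rw [← Measure.volume_eq_prod]; exact iBP
    exact h2.integral_prod_left
  -- step 2 : pointwise bound on |A|
  have step2 : ∀ y c : ℝ, |A s φ ![y, c]| ≤ ∫ z : ℝ, |Bf s φ ![y, z]| := by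
    intro y c
    refine oneD (F := fun z => A s φ ![y, z]) (G := fun z => Bf s φ ![y, z]) (M := s^2)
      (fun z => hasDerivAt_A hs hφ y z) (cB.comp (cline1 y)) ?_ ?_ c
    · apply Continuous.integrable_of_hasCompactSupport (cB.comp (cline1 y))
      apply hcs_line hs
      intro z hzz
      exact hBz _ (Or.inr (by simpa using hzz))
    · intro z hzz
      exact hAz _ (Or.inr (by simp only [Matrix.cons_val_one, Matrix.head_cons]; exact le_trans hzz (le_abs_self z)))
  -- step 1 : bound g by the integral of |A|
  have step1 : g s φ ![a, b] ≤ ∫ y : ℝ, |A s φ ![y, b]| := by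
    have h := oneD (F := fun y => g s φ ![y, b]) (G := fun y => A s φ ![y, b]) (M := s^2)
      (fun y => hasDerivAt_g hs (hφ.differentiable (by norm_cast)) y b)
      (cA.comp (cline0 b))
      (by
        apply Continuous.integrable_of_hasCompactSupport (cA.comp (cline0 b))
        apply hcs_line hs
        intro y hy
        exact hAz _ (Or.inl (by simpa using hy)))
      (fun y hy => hgz _ (Or.inl (by simp only [Matrix.cons_val_zero]; exact le_trans hy (le_abs_self y)))) a
    exact le_trans (le_abs_self _) h
  -- combine
  have iA : Integrable (fun y : ℝ => |A s φ ![y, b]|) volume := by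
    apply Integrable.abs
    apply Continuous.integrable_of_hasCompactSupport (cA.comp (cline0 b))
    apply hcs_line hs
    intro y hy
    exact hAz _ (Or.inl (by simpa using hy))
  calc g s φ ![a, b] ≤ ∫ y : ℝ, |A s φ ![y, b]| := step1
    _ ≤ ∫ y : ℝ, ∫ z : ℝ, |Bf s φ ![y, z]| := by
        apply integral_mono iA iBmarg
        intro y
        exact step2 y b
    _ = ∫ z : ℝ × ℝ, |Bf s φ ![z.1, z.2]| := by
        have h2 : Integrable (fun z : ℝ × ℝ => |Bf s φ ![z.1, z.2]|) ((volume : Measure ℝ).prod volume) := by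
          rw [← Measure.volume_eq_prod]; exact iBP
        rw [show (volume : Measure (ℝ × ℝ)) = (volume : Measure ℝ).prod volume from Measure.volume_eq_prod ℝ ℝ]
        exact (integral_prod _ h2).symm
    _ = ∫ x : Fin 2 → ℝ, |Bf s φ x| := by
        have := (mp.symm e).integral_comp e.symm.measurableEmbedding
          (g := fun x : Fin 2 → ℝ => |Bf s φ x|)
        rw [← this]
        congr 1

lemma intBf_le (hs : 2 ≤ s) (hφ : ContDiff ℝ (⊤ : ℕ∞) φ)
    (hsupp : ∀ p ∈ U, φ p = 0) :
    ∫ x : Fin 2 → ℝ, |Bf s φ x| ≤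
      4 * (Real.sqrt (∫ x : Fin 2 → ℝ, (φ (hyp s x))^2)
            * Real.sqrt (∫ x : Fin 2 → ℝ, (boost 1 φ (hyp s x))^2))
      + 2 * (Real.sqrt (∫ x : Fin 2 → ℝ, (φ (hyp s x))^2)
            * Real.sqrt (∫ x : Fin 2 → ℝ, (boost 0 φ (hyp s x))^2))
      + 2 * (Real.sqrt (∫ x : Fin 2 → ℝ, (boost 1 φ (hyp s x))^2)
            * Real.sqrt (∫ x : Fin 2 → ℝ, (boost 0 φ (hyp s x))^2))
      + 2 * (Real.sqrt (∫ x : Fin 2 → ℝ, (φ (hyp s x))^2)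
            * Real.sqrt (∫ x : Fin 2 → ℝ, (boost 1 (boost 0 φ) (hyp s x))^2)) := by
  have hB0U : ∀ p ∈ U, boost 0 φ p = 0 := vanish_boost hsupp 0
  have hB1U : ∀ p ∈ U, boost 1 φ p = 0 := vanish_boost hsupp 1
  have hB10U : ∀ p ∈ U, boost 1 (boost 0 φ) p = 0 := vanish_boost hB0U 1
  set Ψ := fun x : Fin 2 → ℝ => φ (hyp s x) with hΨdef
  set B0 := fun x : Fin 2 → ℝ => boost 0 φ (hyp s x) with hB0def
  set B1 := fun x : Fin 2 → ℝ => boost 1 φ (hyp s x) with hB1def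
  set B10 := fun x : Fin 2 → ℝ => boost 1 (boost 0 φ) (hyp s x) with hB10def
  have cΨ : Continuous Ψ := hφ.continuous.comp (hyp_continuous s)
  have cB0 : Continuous B0 := ((boost_contDiff hφ 0).continuous).comp (hyp_continuous s)
  have cB1 : Continuous B1 := ((boost_contDiff hφ 1).continuous).comp (hyp_continuous s)
  have cB10 : Continuous B10 :=
    ((boost_contDiff (boost_contDiff hφ 0) 1).continuous).comp (hyp_continuous s)
  have sΨ : HasCompactSupport Ψ :=
    hcs_plane hs (fun x hx => hsupp _ (mem_U hs x hx))
  have sB0 : HasCompactSupport B0 :=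
    hcs_plane hs (fun x hx => hB0U _ (mem_U hs x hx))
  have sB1 : HasCompactSupport B1 :=
    hcs_plane hs (fun x hx => hB1U _ (mem_U hs x hx))
  have sB10 : HasCompactSupport B10 :=
    hcs_plane hs (fun x hx => hB10U _ (mem_U hs x hx))
  -- pointwise bound
  have hpt : ∀ x : Fin 2 → ℝ, |Bf s φ x| ≤
      4 * |Ψ x * B1 x| + 2 * |Ψ x * B0 x| + 2 * |B1 x * B0 x| + 2 * |Ψ x * B10 x| := by
    intro x
    have hT := T_pos hs x
    have h0 : |x 0 / T s x| ≤ 1 := by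
      rw [abs_div, abs_of_pos hT, div_le_one hT]; exact abs_le_T hs x 0
    have h1 : |x 1 / T s x| ≤ 1 := by
      rw [abs_div, abs_of_pos hT, div_le_one hT]; exact abs_le_T hs x 1
    have e1 : |4 * (x 0 / T s x) * Ψ x * B1 x| ≤ 4 * |Ψ x * B1 x| := by
      rw [show 4 * (x 0 / T s x) * Ψ x * B1 x = (x 0 / T s x) * (4 * (Ψ x * B1 x)) by ring,
        abs_mul]
      calc |x 0 / T s x| * |4 * (Ψ x * B1 x)| ≤ 1 * |4 * (Ψ x * B1 x)| :=
            mul_le_mul_of_nonneg_right h0 (abs_nonneg _)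
        _ = 4 * |Ψ x * B1 x| := by rw [one_mul, abs_mul]; simp [abs_of_nonneg]
    have e2 : |2 * (x 1 / T s x) * Ψ x * B0 x| ≤ 2 * |Ψ x * B0 x| := by
      rw [show 2 * (x 1 / T s x) * Ψ x * B0 x = (x 1 / T s x) * (2 * (Ψ x * B0 x)) by ring,
        abs_mul]
      calc |x 1 / T s x| * |2 * (Ψ x * B0 x)| ≤ 1 * |2 * (Ψ x * B0 x)| :=
            mul_le_mul_of_nonneg_right h1 (abs_nonneg _)
        _ = 2 * |Ψ x * B0 x| := by rw [one_mul, abs_mul]; simp [abs_of_nonneg]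
    have e3 : |2 * B1 x * B0 x| = 2 * |B1 x * B0 x| := by
      rw [show 2 * B1 x * B0 x = 2 * (B1 x * B0 x) by ring, abs_mul]
      simp [abs_of_nonneg]
    have e4 : |2 * Ψ x * B10 x| = 2 * |Ψ x * B10 x| := by
      rw [show 2 * Ψ x * B10 x = 2 * (Ψ x * B10 x) by ring, abs_mul]
      simp [abs_of_nonneg]
    calc |Bf s φ x| ≤ |4 * (x 0 / T s x) * Ψ x * B1 x| + |2 * (x 1 / T s x) * Ψ x * B0 x|
          + |2 * B1 x * B0 x| + |2 * Ψ x * B10 x| := by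
          unfold Bf
          exact le_trans (abs_add_le _ _) (add_le_add (le_trans (abs_add_le _ _)
            (add_le_add (abs_add_le _ _) le_rfl)) le_rfl)
      _ ≤ 4 * |Ψ x * B1 x| + 2 * |Ψ x * B0 x| + 2 * |B1 x * B0 x| + 2 * |Ψ x * B10 x| := by
          rw [e3, e4]; exact add_le_add (add_le_add (add_le_add e1 e2) le_rfl) le_rfl
  -- integrabilities
  have iΨB1 : Integrable (fun x => |Ψ x * B1 x|) volume :=
    ((cΨ.mul cB1).integrable_of_hasCompactSupport (sΨ.mul_right)).abs
  have iΨB0 : Integrable (fun x => |Ψ x * B0 x|) volume :=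
    ((cΨ.mul cB0).integrable_of_hasCompactSupport (sΨ.mul_right)).abs
  have iB1B0 : Integrable (fun x => |B1 x * B0 x|) volume :=
    ((cB1.mul cB0).integrable_of_hasCompactSupport (sB1.mul_right)).abs
  have iΨB10 : Integrable (fun x => |Ψ x * B10 x|) volume :=
    ((cΨ.mul cB10).integrable_of_hasCompactSupport (sΨ.mul_right)).abs
  have cB : Continuous (Bf s φ) := by
    have cT := T_continuous s
    have cTne : ∀ x : Fin 2 → ℝ, T s x ≠ 0 := fun x => (T_pos hs x).ne'
    apply Continuous.add
    apply Continuous.add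
    apply Continuous.add
    · exact ((continuous_const.mul ((continuous_apply 0).div cT cTne)).mul cΨ).mul cB1
    · exact ((continuous_const.mul ((continuous_apply 1).div cT cTne)).mul cΨ).mul cB0
    · exact (continuous_const.mul cB1).mul cB0
    · exact (continuous_const.mul cΨ).mul cB10
  have hBz : ∀ x : Fin 2 → ℝ, (s^2 ≤ |x 0| ∨ s^2 ≤ |x 1|) → Bf s φ x = 0 := by
    intro x hx
    have h1 := hsupp _ (mem_U hs x hx)
    have h2 := hB1U _ (mem_U hs x hx)
    simp [Bf, hΨdef, h1, h2]
  have iB : Integrable (fun x : Fin 2 → ℝ => |Bf s φ x|) volume :=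
    (cB.integrable_of_hasCompactSupport (hcs_plane hs hBz)).abs
  calc ∫ x : Fin 2 → ℝ, |Bf s φ x|
      ≤ ∫ x : Fin 2 → ℝ, (4 * |Ψ x * B1 x| + 2 * |Ψ x * B0 x| + 2 * |B1 x * B0 x|
          + 2 * |Ψ x * B10 x|) := by
        apply integral_mono iB _ hpt
        exact (((iΨB1.const_mul 4).add (iΨB0.const_mul 2)).add (iB1B0.const_mul 2)).add
          (iΨB10.const_mul 2)
    _ = 4 * (∫ x, |Ψ x * B1 x|) + 2 * (∫ x, |Ψ x * B0 x|) + 2 * (∫ x, |B1 x * B0 x|)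
          + 2 * (∫ x, |Ψ x * B10 x|) := by
        have E1 : ∫ x : Fin 2 → ℝ, (4 * |Ψ x * B1 x| + 2 * |Ψ x * B0 x| + 2 * |B1 x * B0 x|
              + 2 * |Ψ x * B10 x|)
            = (∫ x : Fin 2 → ℝ, (4 * |Ψ x * B1 x| + 2 * |Ψ x * B0 x| + 2 * |B1 x * B0 x|))
              + ∫ x : Fin 2 → ℝ, 2 * |Ψ x * B10 x| :=
          integral_add (((iΨB1.const_mul 4).add (iΨB0.const_mul 2)).add (iB1B0.const_mul 2))
            (iΨB10.const_mul 2)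
        have E2 : ∫ x : Fin 2 → ℝ, (4 * |Ψ x * B1 x| + 2 * |Ψ x * B0 x| + 2 * |B1 x * B0 x|)
            = (∫ x : Fin 2 → ℝ, (4 * |Ψ x * B1 x| + 2 * |Ψ x * B0 x|))
              + ∫ x : Fin 2 → ℝ, 2 * |B1 x * B0 x| :=
          integral_add ((iΨB1.const_mul 4).add (iΨB0.const_mul 2)) (iB1B0.const_mul 2)
        have E3 : ∫ x : Fin 2 → ℝ, (4 * |Ψ x * B1 x| + 2 * |Ψ x * B0 x|)
            = (∫ x : Fin 2 → ℝ, 4 * |Ψ x * B1 x|) + ∫ x : Fin 2 → ℝ, 2 * |Ψ x * B0 x| :=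
          integral_add (iΨB1.const_mul 4) (iΨB0.const_mul 2)
        rw [E1, E2, E3, integral_const_mul, integral_const_mul, integral_const_mul,
          integral_const_mul]
    _ ≤ _ := by
        have c1 := cs2 cΨ cB1 sΨ sB1
        have c2 := cs2 cΨ cB0 sΨ sB0
        have c3 := cs2 cB1 cB0 sB1 sB0
        have c4 := cs2 cΨ cB10 sΨ sB10
        exact add_le_add (add_le_add (add_le_add
          (mul_le_mul_of_nonneg_left c1 (by norm_num : (0:ℝ) ≤ 4))
          (mul_le_mul_of_nonneg_left c2 (by norm_num : (0:ℝ) ≤ 2)))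
          (mul_le_mul_of_nonneg_left c3 (by norm_num : (0:ℝ) ≤ 2)))
          (mul_le_mul_of_nonneg_left c4 (by norm_num : (0:ℝ) ≤ 2))

end KS

/-- **Klainerman–Sobolev estimate on hyperboloids** (Lemma 4.7). For smooth `φ` supported in
the cone `K` and `s ≥ 2`: `sup_{H_s} |t φ| ≤ C Σ_{|J|≤2} ‖L^J φ‖_{L²_f(H_s)}`. -/
theorem klainerman_sobolev_hyperboloid :
    ∃ C : ℝ, 0 < C ∧
      ∀ φ : Pt → ℝ, ContDiff ℝ (⊤ : ℕ∞) φ → (∀ p, p ∉ coneK → φ p = 0) →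
      ∀ s : ℝ, 2 ≤ s →
      ∀ p : Pt, 0 < p 0 → (p 0)^2 - (rad p)^2 = s^2 →
        |p 0 * φ p|
          ≤ C * (L2f s φ
              + (∑ a : Fin 2, L2f s (boost a φ))
              + ∑ a : Fin 2, ∑ b : Fin 2, L2f s (boost a (boost b φ))) := by

  refine ⟨4, by norm_num, ?_⟩
  intro φ hφ hφK s hs p hp0 hps
  have hsupp : ∀ q ∈ KS.U, φ q = 0 := by
    intro q hq
    apply hφK
    simp only [coneK, Set.mem_setOf_eq, not_lt]
    exact le_of_lt hq
  -- p lies on the parametrized hyperboloid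
  have hrad2 : (rad p)^2 = (p 1)^2 + (p 2)^2 :=
    Real.sq_sqrt (by positivity)
  have hp02 : (p 0)^2 = s^2 + (p 1)^2 + (p 2)^2 := by
    linarith [hps, hrad2]
  have hpeq : p = hyp s ![p 1, p 2] := by
    funext i
    fin_cases i
    · show p 0 = hyp s ![p 1, p 2] 0
      rw [KS.hyp_zero]
      unfold KS.T
      simp only [Matrix.cons_val_zero, Matrix.cons_val_one, Matrix.head_cons]
      rw [← hp02, Real.sqrt_sq hp0.le]
    · rfl
    · rfl
  set N := L2f s φ with hN
  set N0 := L2f s (boost 0 φ) with hN0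
  set N1 := L2f s (boost 1 φ) with hN1
  set N00 := L2f s (boost 0 (boost 0 φ)) with hN00
  set N01 := L2f s (boost 0 (boost 1 φ)) with hN01
  set N10 := L2f s (boost 1 (boost 0 φ)) with hN10
  set N11 := L2f s (boost 1 (boost 1 φ)) with hN11
  set S := N + (∑ a : Fin 2, L2f s (boost a φ))
      + ∑ a : Fin 2, ∑ b : Fin 2, L2f s (boost a (boost b φ)) with hSdef
  have hSexp : S = N + (N0 + N1) + ((N00 + N01) + (N10 + N11)) := by
    rw [hSdef, Fin.sum_univ_two, Fin.sum_univ_two, Fin.sum_univ_two, Fin.sum_univ_two]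
  have nnN : 0 ≤ N := Real.sqrt_nonneg _
  have nnN0 : 0 ≤ N0 := Real.sqrt_nonneg _
  have nnN1 : 0 ≤ N1 := Real.sqrt_nonneg _
  have nnN00 : 0 ≤ N00 := Real.sqrt_nonneg _
  have nnN01 : 0 ≤ N01 := Real.sqrt_nonneg _
  have nnN10 : 0 ≤ N10 := Real.sqrt_nonneg _
  have nnN11 : 0 ≤ N11 := Real.sqrt_nonneg _
  have nnS : 0 ≤ S := by rw [hSexp]; linarith
  have hNS : N ≤ S := by rw [hSexp]; linarith
  have hN0S : N0 ≤ S := by rw [hSexp]; linarith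
  have hN1S : N1 ≤ S := by rw [hSexp]; linarith
  have hN10S : N10 ≤ S := by rw [hSexp]; linarith
  -- main quantitative bound
  have hg : (p 0 * φ p)^2 = KS.g s φ ![p 1, p 2] := by
    rw [KS.g]
    congr 1
    rw [hpeq]
    rfl
  have hmain : KS.g s φ ![p 1, p 2] ≤ 4 * (N * N1) + 2 * (N * N0) + 2 * (N1 * N0)
      + 2 * (N * N10) :=
    le_trans (KS.main_bound hs hφ hsupp (p 1) (p 2)) (KS.intBf_le hs hφ hsupp)
  have hprod1 : N * N1 ≤ S * S := mul_le_mul hNS hN1S nnN1 nnS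
  have hprod2 : N * N0 ≤ S * S := mul_le_mul hNS hN0S nnN0 nnS
  have hprod3 : N1 * N0 ≤ S * S := mul_le_mul hN1S hN0S nnN0 nnS
  have hprod4 : N * N10 ≤ S * S := mul_le_mul hNS hN10S nnN10 nnS
  have hsq : (p 0 * φ p)^2 ≤ (4 * S)^2 := by
    rw [hg]
    nlinarith [hmain]
  calc |p 0 * φ p| = Real.sqrt ((p 0 * φ p)^2) := (Real.sqrt_sq_eq_abs _).symm
    _ ≤ Real.sqrt ((4 * S)^2) := Real.sqrt_le_sqrt hsq
    _ = |4 * S| := Real.sqrt_sq_eq_abs _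
    _ = 4 * S := abs_of_nonneg (by linarith)
end
end

section
/- Weighted Klainerman–Sobolev estimate on hyperboloids. For every γ ≥ 0 there exists a constant C > 0 such that for every smooth function φ supported in the cone K and every s ≥ 2: sup_{(t,x) ∈ H_s} | s (t − r)^{−γ} φ(t, x) | ≤ C Σ_{|J| ≤ 2} ‖ (s/t) (t − r)^{−γ} L^J φ ‖_{L²_f(H_s)}, where the sum runs over all finite sequences J of indices in {1,2} of length at most 2. -/
noncomputable section

open MeasureTheory

section KSaux
open Set

/-- 1D: integrable, cont-diff-free FTC bound with outward indicator. -/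
lemma oneD_bound {h h' : ℝ → ℝ} (hd : ∀ x, HasDerivAt h (h' x) x)
    (hint : Integrable h') {M : ℝ} (hvan : ∀ x, M ≤ |x| → h x = 0) (c : ℝ) :
    |h c| ≤ ∫ y, Set.indicator {y : ℝ | |c| ≤ |y|} (fun y => |h' y|) y := by
  have hSmeas : MeasurableSet {y : ℝ | |c| ≤ |y|} :=
    (isClosed_le continuous_const continuous_abs).measurableSet
  have hdom : Integrable (Set.indicator {y : ℝ | |c| ≤ |y|} (fun y => |h' y|)) :=
    hint.abs.indicator hSmeas
  rcases le_or_gt 0 c with hc | hc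
  · have htend : Filter.Tendsto h Filter.atTop (nhds 0) := by
      refine Filter.Tendsto.congr' ?_ (tendsto_const_nhds (α := ℝ))
      filter_upwards [Filter.eventually_ge_atTop (max M 0)] with x hx
      have hx0 : (0:ℝ) ≤ x := le_trans (le_max_right _ _) hx
      have hxM : M ≤ x := le_trans (le_max_left _ _) hx
      rw [hvan x (by rw [abs_of_nonneg hx0]; exact hxM)]
    have key : ∫ x in Set.Ioi c, h' x = 0 - h c :=
      integral_Ioi_of_hasDerivAt_of_tendsto' (fun x _ => hd x) hint.integrableOn htend
    have h1 : |h c| = |∫ x in Set.Ioi c, h' x| := by rw [key]; rw [zero_sub, abs_neg]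
    rw [h1]
    calc |∫ x in Set.Ioi c, h' x| ≤ ∫ x in Set.Ioi c, |h' x| := by
          simpa [Real.norm_eq_abs] using
            norm_integral_le_integral_norm (μ := volume.restrict (Set.Ioi c)) h'
      _ = ∫ y, Set.indicator (Set.Ioi c) (fun y => |h' y|) y := by
          rw [integral_indicator measurableSet_Ioi]
      _ ≤ _ := by
          refine integral_mono_of_nonneg ?_ hdom ?_
          · exact Filter.Eventually.of_forall fun y =>
              Set.indicator_nonneg (fun y _ => abs_nonneg _) y
          · refine Filter.Eventually.of_forall fun y => ?_
            refine Set.indicator_le_indicator_of_subset ?_ (fun y => abs_nonneg _) y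
            intro y hy
            have : c < y := hy
            simp only [Set.mem_setOf_eq]
            rw [abs_of_nonneg hc]
            exact le_trans this.le (le_abs_self y)
  · have htend : Filter.Tendsto h Filter.atBot (nhds 0) := by
      refine Filter.Tendsto.congr' ?_ (tendsto_const_nhds (α := ℝ))
      filter_upwards [Filter.eventually_le_atBot (min (-M) 0)] with x hx
      rw [hvan x ?_]
      have hx0 : x ≤ 0 := le_trans hx (min_le_right _ _)
      rw [abs_of_nonpos hx0]
      have : x ≤ -M := le_trans hx (min_le_left _ _)
      linarith
    have key : ∫ x in Set.Iic c, h' x = h c - 0 :=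
      integral_Iic_of_hasDerivAt_of_tendsto' (fun x _ => hd x) hint.integrableOn htend
    have h1 : |h c| = |∫ x in Set.Iic c, h' x| := by rw [key, sub_zero]
    rw [h1]
    calc |∫ x in Set.Iic c, h' x| ≤ ∫ x in Set.Iic c, |h' x| := by
          simpa [Real.norm_eq_abs] using
            norm_integral_le_integral_norm (μ := volume.restrict (Set.Iic c)) h'
      _ = ∫ y, Set.indicator (Set.Iic c) (fun y => |h' y|) y := by
          rw [integral_indicator measurableSet_Iic]
      _ ≤ _ := by
          refine integral_mono_of_nonneg ?_ hdom ?_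
          · exact Filter.Eventually.of_forall fun y =>
              Set.indicator_nonneg (fun y _ => abs_nonneg _) y
          · refine Filter.Eventually.of_forall fun y => ?_
            refine Set.indicator_le_indicator_of_subset ?_ (fun y => abs_nonneg _) y
            intro y hy
            have hyc : y ≤ c := hy
            simp only [Set.mem_setOf_eq]
            rw [abs_of_nonpos hc.le, abs_of_nonpos (le_trans hyc hc.le)]
            linarith

/-- Cauchy–Schwarz for nonnegative functions. -/
lemma CS_bound {α : Type*} [MeasurableSpace α] {μ : Measure α} {f g : α → ℝ}
    (hf0 : ∀ x, 0 ≤ f x) (hg0 : ∀ x, 0 ≤ g x)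
    (hf : MemLp f 2 μ) (hg : MemLp g 2 μ) :
    ∫ x, f x * g x ∂μ ≤ Real.sqrt (∫ x, f x ^ 2 ∂μ) * Real.sqrt (∫ x, g x ^ 2 ∂μ) := by
  have hconj : (2:ℝ).HolderConjugate 2 := ⟨by norm_num, by norm_num, by norm_num⟩
  have h2 : ENNReal.ofReal (2:ℝ) = 2 := by simp [ENNReal.ofReal_ofNat]
  have := integral_mul_le_Lp_mul_Lq_of_nonneg (μ := μ) hconj
    (Filter.Eventually.of_forall hf0) (Filter.Eventually.of_forall hg0)
    (h2 ▸ hf) (h2 ▸ hg)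
  have e1 : ∀ (F : α → ℝ), (∀ x, 0 ≤ F x) → ∫ x, F x ^ (2:ℝ) ∂μ = ∫ x, F x ^ 2 ∂μ := by
    intro F hF
    refine integral_congr_ae (Filter.Eventually.of_forall fun x => ?_)
    show F x ^ (2:ℝ) = F x ^ (2:ℕ)
    rw [show ((2:ℝ) = ((2:ℕ):ℝ)) by norm_num, Real.rpow_natCast]
  rw [e1 f hf0, e1 g hg0] at this
  calc ∫ x, f x * g x ∂μ
      ≤ (∫ x, f x ^ 2 ∂μ) ^ (1/(2:ℝ)) * (∫ x, g x ^ 2 ∂μ) ^ (1/(2:ℝ)) := this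
    _ = _ := by
        rw [← Real.sqrt_eq_rpow, ← Real.sqrt_eq_rpow]

/-- continuous + vanishing outside a ball implies integrable (on ℝ). -/
lemma int1d {f : ℝ → ℝ} {M : ℝ} (hc : Continuous f) (hv : ∀ x, M ≤ |x| → f x = 0) :
    Integrable f := by
  refine hc.integrable_of_hasCompactSupport ?_
  refine HasCompactSupport.intro (isCompact_Icc (a := -|M|) (b := |M|)) fun x hx => ?_
  refine hv x ?_
  simp only [Set.mem_Icc, not_and_or, not_le] at hx
  rcases hx with hx | hx
  · have : M < -x := lt_of_le_of_lt (le_abs_self M) (by linarith)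
    exact le_trans this.le (neg_le_abs x)
  · have : M < x := lt_of_le_of_lt (le_abs_self M) hx
    exact le_trans this.le (le_abs_self x)

lemma hcs2d {f : ℝ × ℝ → ℝ} {M : ℝ} (hv : ∀ z : ℝ × ℝ, M ≤ max |z.1| |z.2| → f z = 0) :
    HasCompactSupport f := by
  refine HasCompactSupport.intro (isCompact_closedBall (0 : ℝ × ℝ) |M|) fun z hz => ?_
  refine hv z ?_
  rw [Metric.mem_closedBall, dist_zero_right, Prod.norm_def, Real.norm_eq_abs,
    Real.norm_eq_abs, not_le] at hz
  exact le_trans (le_abs_self M) hz.le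

lemma twoD_bound {G G₁ G₁₂ : ℝ × ℝ → ℝ} {M : ℝ}
    (h1 : ∀ a b : ℝ, HasDerivAt (fun a' => G (a', b)) (G₁ (a, b)) a)
    (h2 : ∀ a b : ℝ, HasDerivAt (fun b' => G₁ (a, b')) (G₁₂ (a, b)) b)
    (hG1c : Continuous G₁) (hG12c : Continuous G₁₂)
    (hvG : ∀ z : ℝ × ℝ, M ≤ max |z.1| |z.2| → G z = 0)
    (hvG1 : ∀ z : ℝ × ℝ, M ≤ max |z.1| |z.2| → G₁ z = 0)
    (hvG12 : ∀ z : ℝ × ℝ, M ≤ max |z.1| |z.2| → G₁₂ z = 0)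
    (z₀ : ℝ × ℝ) :
    |G z₀| ≤ ∫ z : ℝ × ℝ,
      Set.indicator {z : ℝ × ℝ | |z₀.1| ≤ |z.1| ∧ |z₀.2| ≤ |z.2|} (fun z => |G₁₂ z|) z := by
  set S : Set (ℝ × ℝ) := {z : ℝ × ℝ | |z₀.1| ≤ |z.1| ∧ |z₀.2| ≤ |z.2|} with hS
  have hSclosed : IsClosed S := by
    apply IsClosed.inter
    · exact isClosed_le continuous_const (continuous_abs.comp continuous_fst)
    · exact isClosed_le continuous_const (continuous_abs.comp continuous_snd)
  have hSmeas : MeasurableSet S := hSclosed.measurableSet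
  have hG12int : Integrable G₁₂ := (hG12c.integrable_of_hasCompactSupport (hcs2d hvG12))
  set h : ℝ × ℝ → ℝ := S.indicator (fun z => |G₁₂ z|) with hh
  have hh_int : Integrable h := hG12int.abs.indicator hSmeas
  -- inner bound
  have inner : ∀ a : ℝ, |G₁ (a, z₀.2)|
      ≤ ∫ b, Set.indicator {b : ℝ | |z₀.2| ≤ |b|} (fun b => |G₁₂ (a, b)|) b := by
    intro a
    refine oneD_bound (h2 a) ?_ (M := M) (fun b hb => hvG1 (a, b) (le_trans hb (le_max_right _ _))) z₀.2
    exact int1d (hG12c.comp (Continuous.prodMk_right a))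
      (fun b hb => hvG12 (a, b) (le_trans hb (le_max_right _ _)))
  -- outer bound
  have outer : |G z₀| ≤ ∫ a, Set.indicator {a : ℝ | |z₀.1| ≤ |a|}
      (fun a => |G₁ (a, z₀.2)|) a := by
    have := oneD_bound (h' := fun a => G₁ (a, z₀.2)) (fun a => h1 a z₀.2) ?_ (M := M)
      (fun a ha => hvG (a, z₀.2) (le_trans ha (le_max_left _ _))) z₀.1
    · simpa using this
    · exact int1d (hG1c.comp (continuous_id.prodMk continuous_const))
        (fun a ha => hvG1 (a, z₀.2) (le_trans ha (le_max_left _ _)))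
  have hvol : (volume : Measure (ℝ × ℝ)) = (volume : Measure ℝ).prod volume :=
    MeasureTheory.Measure.volume_eq_prod ℝ ℝ
  have hh_int' : Integrable h ((volume : Measure ℝ).prod volume) := by rwa [← hvol]
  have hg_int : Integrable (fun a => ∫ b, h (a, b)) := hh_int'.integral_prod_left
  have step : ∀ a : ℝ, Set.indicator {a : ℝ | |z₀.1| ≤ |a|} (fun a => |G₁ (a, z₀.2)|) a
      ≤ ∫ b, h (a, b) := by
    intro a
    rcases le_or_gt |z₀.1| |a| with ha | ha
    · rw [Set.indicator_of_mem (by exact ha : a ∈ {a : ℝ | |z₀.1| ≤ |a|})]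
      refine le_trans (inner a) (le_of_eq ?_)
      congr 1
      funext b
      simp only [hh, Set.indicator, hS, Set.mem_setOf_eq]
      by_cases hb : |z₀.2| ≤ |b|
      · simp [hb, ha]
      · simp [hb]
    · rw [Set.indicator_of_notMem (by simpa using ha)]
      exact integral_nonneg fun b => Set.indicator_nonneg (fun _ _ => abs_nonneg _) _
  calc |G z₀| ≤ ∫ a, Set.indicator {a : ℝ | |z₀.1| ≤ |a|} (fun a => |G₁ (a, z₀.2)|) a := outer
    _ ≤ ∫ a, ∫ b, h (a, b) := by
        refine integral_mono_of_nonneg ?_ hg_int ?_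
        · exact Filter.Eventually.of_forall fun a =>
            Set.indicator_nonneg (fun _ _ => abs_nonneg _) _
        · exact Filter.Eventually.of_forall step
    _ = ∫ z : ℝ × ℝ, h z := by
        rw [hvol, integral_prod _ hh_int']

lemma fderiv_apply3 (ψ : Pt → ℝ) (p : Pt) (w : Fin 3 → ℝ) :
    fderiv ℝ ψ p w = w 0 * pd 0 ψ p + w 1 * pd 1 ψ p + w 2 * pd 2 ψ p := by
  have hw : w = w 0 • (Pi.single 0 1 : Fin 3 → ℝ) + w 1 • (Pi.single 1 1 : Fin 3 → ℝ)
      + w 2 • (Pi.single 2 1 : Fin 3 → ℝ) := by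
    funext i
    fin_cases i <;> simp [Pi.single_apply]
  conv_lhs => rw [hw]
  rw [map_add, map_add, (fderiv ℝ ψ p).map_smul, (fderiv ℝ ψ p).map_smul,
    (fderiv ℝ ψ p).map_smul]
  simp only [pd, smul_eq_mul]

lemma contDiff_pd {φ : Pt → ℝ} (hφ : ContDiff ℝ (⊤:ℕ∞) φ) (i : Fin 3) :
    ContDiff ℝ (⊤:ℕ∞) (pd i φ) := by
  have h1 : ContDiff ℝ (⊤:ℕ∞) (fderiv ℝ φ) := hφ.fderiv_right (by simp)
  exact h1.clm_apply contDiff_const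

lemma contDiff_coord (i : Fin 3) : ContDiff ℝ (⊤:ℕ∞) (fun p : Pt => p i) :=
  (ContinuousLinearMap.proj i : Pt →L[ℝ] ℝ).contDiff

lemma contDiff_boost {φ : Pt → ℝ} (hφ : ContDiff ℝ (⊤:ℕ∞) φ) (a : Fin 2) :
    ContDiff ℝ (⊤:ℕ∞) (boost a φ) := by
  unfold boost
  exact ((contDiff_coord a.succ).mul (contDiff_pd hφ 0)).add
    ((contDiff_coord 0).mul (contDiff_pd hφ a.succ))

lemma continuous_rad : Continuous rad := by
  unfold rad
  exact (((continuous_apply (1 : Fin 3)).pow 2).add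
    ((continuous_apply (2 : Fin 3)).pow 2)).sqrt

lemma pd_vanish {φ : Pt → ℝ} (hφ : ContDiff ℝ (⊤:ℕ∞) φ)
    (hsupp : ∀ p, p ∉ coneK → φ p = 0) :
    ∀ p, p ∉ coneK → ∀ i, pd i φ p = 0 := by
  set U : Set Pt := {p | p 0 - 1 < rad p} with hU
  have hUopen : IsOpen U := isOpen_lt (by continuity) continuous_rad
  have hU0 : ∀ p ∈ U, fderiv ℝ φ p = 0 := by
    intro p hp
    have hev : φ =ᶠ[nhds p] (fun _ => (0:ℝ)) := by
      filter_upwards [hUopen.mem_nhds hp] with q hq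
      refine hsupp q ?_
      simp only [coneK, Set.mem_setOf_eq, not_lt]
      exact le_of_lt hq
    rw [Filter.EventuallyEq.fderiv_eq hev, fderiv_fun_const]
    rfl
  have hcont : Continuous (fun p => fderiv ℝ φ p) :=
    (hφ.fderiv_right (m := ((⊤:ℕ∞) : WithTop ℕ∞)) (by simp)).continuous
  have hclos : Set.EqOn (fun p => fderiv ℝ φ p) (fun _ => (0 : Pt →L[ℝ] ℝ)) (closure U) :=
    Set.EqOn.closure (fun p hp => hU0 p hp) hcont continuous_const
  intro p hp i
  have hpc : p ∈ closure U := by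
    have hle : rad p ≥ p 0 - 1 := by
      simpa [coneK, Set.mem_setOf_eq, not_lt] using hp
    have : Filter.Tendsto (fun δ : ℝ => Function.update p 0 (p 0 - δ)) (nhdsWithin 0 (Set.Ioi 0))
        (nhds p) := by
      have hcont2 : Continuous (fun δ : ℝ => Function.update p 0 (p 0 - δ)) := by
        refine continuous_pi fun i => ?_
        by_cases hi : i = 0
        · subst hi; simp only [Function.update_self]; exact continuous_const.sub continuous_id
        · simp only [Function.update_of_ne hi]; exact continuous_const
      have := hcont2.tendsto 0
      simpa [Function.update_eq_self] using this.mono_left nhdsWithin_le_nhds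
    refine mem_closure_of_tendsto this ?_
    filter_upwards [self_mem_nhdsWithin] with δ hδ
    have hδ0 : (0:ℝ) < δ := hδ
    have hrad : rad (Function.update p 0 (p 0 - δ)) = rad p := by
      unfold rad
      simp [Function.update_of_ne (show (1:Fin 3) ≠ 0 by decide),
        Function.update_of_ne (show (2:Fin 3) ≠ 0 by decide)]
    simp only [hU, Set.mem_setOf_eq, hrad, Function.update_self]
    linarith
  have := hclos hpc
  simp only at this
  unfold pd
  rw [this]
  rfl

lemma boost_vanish {φ : Pt → ℝ} (hφ : ContDiff ℝ (⊤:ℕ∞) φ)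
    (hsupp : ∀ p, p ∉ coneK → φ p = 0) (a : Fin 2) :
    ∀ p, p ∉ coneK → boost a φ p = 0 := by
  intro p hp
  unfold boost
  rw [pd_vanish hφ hsupp p hp 0, pd_vanish hφ hsupp p hp a.succ]
  ring

/-- Parametrization of the hyperboloid over `ℝ × ℝ`. -/
def Hs (s : ℝ) (z : ℝ × ℝ) : Pt := ![Real.sqrt (s^2 + z.1^2 + z.2^2), z.1, z.2]

lemma Hs_zero (s : ℝ) (z : ℝ × ℝ) : Hs s z 0 = Real.sqrt (s^2 + z.1^2 + z.2^2) := rfl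
lemma Hs_one (s : ℝ) (z : ℝ × ℝ) : Hs s z 1 = z.1 := rfl
lemma Hs_two (s : ℝ) (z : ℝ × ℝ) : Hs s z 2 = z.2 := rfl

lemma hyp_eq_Hs (s : ℝ) (x : Fin 2 → ℝ) : hyp s x = Hs s (x 0, x 1) := by
  funext i; fin_cases i <;> rfl

lemma sq_add_sq_nonneg (a b : ℝ) : 0 ≤ a^2 + b^2 := by positivity

lemma rad_Hs (s : ℝ) (z : ℝ × ℝ) : rad (Hs s z) = Real.sqrt (z.1^2 + z.2^2) := rfl

lemma Hs_T_pos {s : ℝ} (hs : 0 < s) (z : ℝ × ℝ) : 0 < Hs s z 0 := by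
  rw [Hs_zero]
  apply Real.sqrt_pos.2
  nlinarith [sq_nonneg z.1, sq_nonneg z.2]

lemma Hs_rad_lt {s : ℝ} (hs : 0 < s) (z : ℝ × ℝ) : rad (Hs s z) < Hs s z 0 := by
  rw [Hs_zero, rad_Hs]
  apply Real.sqrt_lt_sqrt (sq_add_sq_nonneg _ _)
  nlinarith

lemma Hs_T_sq {s : ℝ} (hs : 0 < s) (z : ℝ × ℝ) :
    (Hs s z 0)^2 = s^2 + (rad (Hs s z))^2 := by
  rw [Hs_zero, rad_Hs, Real.sq_sqrt, Real.sq_sqrt (sq_add_sq_nonneg _ _)]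
  · ring
  · nlinarith [sq_nonneg z.1, sq_nonneg z.2]

lemma Hs_weight_pos {s : ℝ} (hs : 0 < s) (z : ℝ × ℝ) :
    0 < Hs s z 0 - rad (Hs s z) := sub_pos.2 (Hs_rad_lt hs z)

lemma Hs_abs_fst_le {s : ℝ} (hs : 0 < s) (z : ℝ × ℝ) : |z.1| ≤ Hs s z 0 := by
  rw [Hs_zero]
  rw [← Real.sqrt_sq_eq_abs]
  apply Real.sqrt_le_sqrt
  nlinarith [sq_nonneg z.2]

lemma Hs_abs_snd_le {s : ℝ} (hs : 0 < s) (z : ℝ × ℝ) : |z.2| ≤ Hs s z 0 := by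
  rw [Hs_zero, ← Real.sqrt_sq_eq_abs]
  apply Real.sqrt_le_sqrt
  nlinarith [sq_nonneg z.1]

lemma continuous_Hs (s : ℝ) : Continuous (Hs s) := by
  refine continuous_pi fun i => ?_
  fin_cases i
  · exact (((continuous_const.add (continuous_fst.pow 2)).add (continuous_snd.pow 2))).sqrt
  · exact continuous_fst
  · exact continuous_snd

/-- Monotonicity of the weight. -/
lemma weight_mono {s γ : ℝ} (hs : 0 < s) (hγ : 0 ≤ γ) {z z' : ℝ × ℝ}
    (h1 : |z.1| ≤ |z'.1|) (h2 : |z.2| ≤ |z'.2|) :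
    (Hs s z 0 - rad (Hs s z)) ^ (-γ) ≤ (Hs s z' 0 - rad (Hs s z')) ^ (-γ) := by
  have hRmono : rad (Hs s z) ≤ rad (Hs s z') := by
    rw [rad_Hs, rad_Hs]
    apply Real.sqrt_le_sqrt
    have e1 : z.1^2 ≤ z'.1^2 := by rw [← sq_abs, ← sq_abs z'.1]; exact pow_le_pow_left₀ (abs_nonneg _) h1 2
    have e2 : z.2^2 ≤ z'.2^2 := by rw [← sq_abs, ← sq_abs z'.2]; exact pow_le_pow_left₀ (abs_nonneg _) h2 2
    linarith
  have hTmono : Hs s z 0 ≤ Hs s z' 0 := by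
    rw [Hs_zero, Hs_zero]
    apply Real.sqrt_le_sqrt
    have e1 : z.1^2 ≤ z'.1^2 := by rw [← sq_abs, ← sq_abs z'.1]; exact pow_le_pow_left₀ (abs_nonneg _) h1 2
    have e2 : z.2^2 ≤ z'.2^2 := by rw [← sq_abs, ← sq_abs z'.2]; exact pow_le_pow_left₀ (abs_nonneg _) h2 2
    linarith
  have key : ∀ w : ℝ × ℝ, Hs s w 0 - rad (Hs s w) = s^2 / (Hs s w 0 + rad (Hs s w)) := by
    intro w
    have hpos : 0 < Hs s w 0 + rad (Hs s w) := by
      have := Hs_T_pos hs w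
      have hr : 0 ≤ rad (Hs s w) := by rw [rad_Hs]; exact Real.sqrt_nonneg _
      linarith
    field_simp
    have := Hs_T_sq hs w
    nlinarith
  have hdiff : Hs s z' 0 - rad (Hs s z') ≤ Hs s z 0 - rad (Hs s z) := by
    rw [key z, key z']
    apply div_le_div_of_nonneg_left (by positivity) ?_ ?_
    · have := Hs_T_pos hs z
      have hr : 0 ≤ rad (Hs s z) := by rw [rad_Hs]; exact Real.sqrt_nonneg _
      linarith
    · linarith
  exact Real.rpow_le_rpow_of_nonpos (Hs_weight_pos hs z') hdiff (neg_nonpos.2 hγ)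

/-- Derivative in the first variable. -/
lemma deriv_sqrt_fst {s : ℝ} (hs : 0 < s) (a b : ℝ) :
    HasDerivAt (fun a' => Real.sqrt (s^2 + a'^2 + b^2))
      (a / Real.sqrt (s^2 + a^2 + b^2)) a := by
  have hq : HasDerivAt (fun a' : ℝ => s^2 + a'^2 + b^2) (2*a) a := by
    have h1 : HasDerivAt (fun a' : ℝ => a'^2) (2*a) a := by
      simpa using hasDerivAt_pow 2 a
    simpa using (h1.const_add (s^2)).add_const (b^2)
  have hpos : (0:ℝ) < s^2 + a^2 + b^2 := by positivity
  have h2 := (Real.hasDerivAt_sqrt (ne_of_gt hpos)).comp a hq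
  refine h2.congr_deriv (Eq.symm ?_)
  have hsq : Real.sqrt (s^2+a^2+b^2) ≠ 0 := by positivity
  field_simp

lemma deriv_sqrt_snd {s : ℝ} (hs : 0 < s) (a b : ℝ) :
    HasDerivAt (fun b' => Real.sqrt (s^2 + a^2 + b'^2))
      (b / Real.sqrt (s^2 + a^2 + b^2)) b := by
  have hq : HasDerivAt (fun b' : ℝ => s^2 + a^2 + b'^2) (2*b) b := by
    have h1 : HasDerivAt (fun b' : ℝ => b'^2) (2*b) b := by
      simpa using hasDerivAt_pow 2 b
    simpa using h1.const_add (s^2 + a^2)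
  have hpos : (0:ℝ) < s^2 + a^2 + b^2 := by positivity
  have h2 := (Real.hasDerivAt_sqrt (ne_of_gt hpos)).comp b hq
  refine h2.congr_deriv (Eq.symm ?_)
  have hsq : Real.sqrt (s^2+a^2+b^2) ≠ 0 := by positivity
  field_simp

lemma derivT_snd {s : ℝ} (hs : 0 < s) (a b : ℝ) :
    HasDerivAt (fun b' => Hs s (a, b') 0) (b / Hs s (a, b) 0) b := by
  simpa [Hs_zero] using deriv_sqrt_snd hs a b

/-- Chain rule: first-variable derivative of `ψ ∘ Hs` is `(boost 0 ψ)/t`. -/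
lemma derivH_fst {s : ℝ} (hs : 0 < s) {ψ : Pt → ℝ} (hψ : ContDiff ℝ (⊤:ℕ∞) ψ) (a b : ℝ) :
    HasDerivAt (fun a' => ψ (Hs s (a', b)))
      (boost 0 ψ (Hs s (a, b)) / Hs s (a, b) 0) a := by
  set T := Real.sqrt (s^2 + a^2 + b^2) with hT
  have hcurve : HasDerivAt (fun a' => Hs s (a', b)) (![a / T, 1, 0]) a := by
    rw [hasDerivAt_pi]
    intro i
    fin_cases i
    · exact deriv_sqrt_fst hs a b
    · exact hasDerivAt_id a
    · exact hasDerivAt_const a b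
  have hfd : HasFDerivAt ψ (fderiv ℝ ψ (Hs s (a, b))) (Hs s (a, b)) :=
    (hψ.differentiable (by simp) (Hs s (a, b))).hasFDerivAt
  have hcomp := hfd.comp_hasDerivAt a hcurve
  refine hcomp.congr_deriv (Eq.symm ?_)
  rw [fderiv_apply3]
  have hTpos : 0 < T := by rw [hT]; positivity
  have h0 : Hs s (a, b) 0 = T := rfl
  have h1 : Hs s (a, b) 1 = a := rfl
  have hsucc : (0:Fin 2).succ = (1:Fin 3) := rfl
  simp only [boost, hsucc]
  rw [h0, h1]
  show (a * pd 0 ψ (Hs s (a,b)) + T * pd 1 ψ (Hs s (a,b))) / T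
    = ![a / T, 1, 0] 0 * pd 0 ψ (Hs s (a,b)) + ![a / T, 1, 0] 1 * pd 1 ψ (Hs s (a,b))
      + ![a / T, 1, 0] 2 * pd 2 ψ (Hs s (a,b))
  simp only [Matrix.cons_val_zero, Matrix.cons_val_one, Matrix.head_cons,
    Matrix.cons_val_two, Matrix.tail_cons]
  field_simp
  ring

lemma derivH_snd {s : ℝ} (hs : 0 < s) {ψ : Pt → ℝ} (hψ : ContDiff ℝ (⊤:ℕ∞) ψ) (a b : ℝ) :
    HasDerivAt (fun b' => ψ (Hs s (a, b')))
      (boost 1 ψ (Hs s (a, b)) / Hs s (a, b) 0) b := by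
  set T := Real.sqrt (s^2 + a^2 + b^2) with hT
  have hcurve : HasDerivAt (fun b' => Hs s (a, b')) (![b / T, 0, 1]) b := by
    rw [hasDerivAt_pi]
    intro i
    fin_cases i
    · exact deriv_sqrt_snd hs a b
    · exact hasDerivAt_const b a
    · exact hasDerivAt_id b
  have hfd : HasFDerivAt ψ (fderiv ℝ ψ (Hs s (a, b))) (Hs s (a, b)) :=
    (hψ.differentiable (by simp) (Hs s (a, b))).hasFDerivAt
  have hcomp := hfd.comp_hasDerivAt b hcurve
  refine hcomp.congr_deriv (Eq.symm ?_)
  rw [fderiv_apply3]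
  have hTpos : 0 < T := by rw [hT]; positivity
  have h0 : Hs s (a, b) 0 = T := rfl
  have h2 : Hs s (a, b) 2 = b := rfl
  have hsucc : (1:Fin 2).succ = (2:Fin 3) := rfl
  simp only [boost, hsucc]
  rw [h0, h2]
  show (b * pd 0 ψ (Hs s (a,b)) + T * pd 2 ψ (Hs s (a,b))) / T
    = ![b / T, 0, 1] 0 * pd 0 ψ (Hs s (a,b)) + ![b / T, 0, 1] 1 * pd 1 ψ (Hs s (a,b))
      + ![b / T, 0, 1] 2 * pd 2 ψ (Hs s (a,b))
  simp only [Matrix.cons_val_zero, Matrix.cons_val_one, Matrix.head_cons,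
    Matrix.cons_val_two, Matrix.tail_cons]
  field_simp
  ring

lemma Hs_not_in_coneK {s : ℝ} (hs : 0 < s) (z : ℝ × ℝ)
    (h : s^2 ≤ max |z.1| |z.2|) : Hs s z ∉ coneK := by
  intro hmem
  have hR : rad (Hs s z) < Hs s z 0 - 1 := hmem
  have hT2 := Hs_T_sq hs z
  have hR0 : 0 ≤ rad (Hs s z) := by rw [rad_Hs]; exact Real.sqrt_nonneg _
  have h1 : |z.1| ≤ rad (Hs s z) := by
    rw [rad_Hs, ← Real.sqrt_sq_eq_abs]
    exact Real.sqrt_le_sqrt (by nlinarith [sq_nonneg z.2])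
  have h2 : |z.2| ≤ rad (Hs s z) := by
    rw [rad_Hs, ← Real.sqrt_sq_eq_abs]
    exact Real.sqrt_le_sqrt (by nlinarith [sq_nonneg z.1])
  have hmax : s^2 ≤ rad (Hs s z) := le_trans h (max_le h1 h2)
  have hTpos := Hs_T_pos hs z
  nlinarith [hR, hT2, hmax, hR0, hTpos]

/-- The `L²` norm on `H_s` of `(s/t)(t-r)^{-γ} ψ` expressed over `ℝ × ℝ`. -/
lemma L2f_eq (s : ℝ) (hs : 0 < s) (γ : ℝ) (ψ : Pt → ℝ) :
    L2f s (fun q => (s / q 0) * (q 0 - rad q) ^ (-γ) * ψ q)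
      = s * Real.sqrt (∫ z : ℝ × ℝ,
          ((Hs s z 0 - rad (Hs s z)) ^ (-γ) / Hs s z 0 * ψ (Hs s z))^2) := by
  unfold L2f
  have step1 : ∀ x : Fin 2 → ℝ,
      ((s / hyp s x 0) * (hyp s x 0 - rad (hyp s x)) ^ (-γ) * ψ (hyp s x))^2
      = (fun z : ℝ × ℝ => (s * ((Hs s z 0 - rad (Hs s z)) ^ (-γ) / Hs s z 0 * ψ (Hs s z)))^2)
          ((MeasurableEquiv.piFinTwo (fun _ : Fin 2 => ℝ)) x) := by
    intro x
    rw [hyp_eq_Hs]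
    have : (MeasurableEquiv.piFinTwo (fun _ : Fin 2 => ℝ)) x = (x 0, x 1) := rfl
    rw [this]
    ring
  rw [integral_congr_ae (Filter.Eventually.of_forall step1)]
  rw [(volume_preserving_piFinTwo (fun _ : Fin 2 => ℝ)).integral_comp'
    (fun z : ℝ × ℝ => (s * ((Hs s z 0 - rad (Hs s z)) ^ (-γ) / Hs s z 0 * ψ (Hs s z)))^2)]
  have step2 : ∫ z : ℝ × ℝ,
      (s * ((Hs s z 0 - rad (Hs s z)) ^ (-γ) / Hs s z 0 * ψ (Hs s z)))^2
      = s^2 * ∫ z : ℝ × ℝ, ((Hs s z 0 - rad (Hs s z)) ^ (-γ) / Hs s z 0 * ψ (Hs s z))^2 := by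
    rw [← integral_const_mul]
    congr 1
    funext z
    ring
  rw [step2, Real.sqrt_mul (sq_nonneg s), Real.sqrt_sq hs.le]

set_option maxHeartbeats 1000000 in
/-- Core pointwise estimate over `ℝ × ℝ`. -/
lemma core_estimate (γ : ℝ) (hγ : 0 ≤ γ) (s : ℝ) (hs0 : 0 < s)
    (φ : Pt → ℝ) (hφ : ContDiff ℝ (⊤:ℕ∞) φ) (hsupp : ∀ p, p ∉ coneK → φ p = 0)
    (z₀ : ℝ × ℝ) :
    ((Hs s z₀ 0 - rad (Hs s z₀)) ^ (-γ)) * |φ (Hs s z₀)|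
      ≤ Real.sqrt (∫ z : ℝ × ℝ,
            ((Hs s z 0 - rad (Hs s z)) ^ (-γ) / Hs s z 0 * φ (Hs s z))^2)
        + Real.sqrt (∫ z : ℝ × ℝ,
            ((Hs s z 0 - rad (Hs s z)) ^ (-γ) / Hs s z 0 * boost 0 φ (Hs s z))^2)
        + Real.sqrt (∫ z : ℝ × ℝ,
            ((Hs s z 0 - rad (Hs s z)) ^ (-γ) / Hs s z 0 * boost 1 φ (Hs s z))^2)
        + Real.sqrt (∫ z : ℝ × ℝ,
            ((Hs s z 0 - rad (Hs s z)) ^ (-γ) / Hs s z 0 * boost 1 (boost 0 φ) (Hs s z))^2) := by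
  -- abbreviations
  set Wf : ℝ × ℝ → ℝ := fun z => (Hs s z 0 - rad (Hs s z)) ^ (-γ) with hWf
  set Tf : ℝ × ℝ → ℝ := fun z => Hs s z 0 with hTf
  set u : ℝ × ℝ → ℝ := fun z => φ (Hs s z) with hu
  set u₁ : ℝ × ℝ → ℝ := fun z => boost 0 φ (Hs s z) with hu1
  set u₂ : ℝ × ℝ → ℝ := fun z => boost 1 φ (Hs s z) with hu2
  set u₂₁ : ℝ × ℝ → ℝ := fun z => boost 1 (boost 0 φ) (Hs s z) with hu21
  have hTpos : ∀ z, 0 < Tf z := fun z => Hs_T_pos hs0 z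
  have hTne : ∀ z, Tf z ≠ 0 := fun z => ne_of_gt (hTpos z)
  have hWpos : ∀ z, 0 < Wf z := fun z => Real.rpow_pos_of_pos (Hs_weight_pos hs0 z) _
  -- continuity
  have hT_c : Continuous Tf := (continuous_apply (0 : Fin 3)).comp (continuous_Hs s)
  have hW_c : Continuous Wf := by
    have hbase : Continuous (fun z : ℝ × ℝ => Hs s z 0 - rad (Hs s z)) :=
      hT_c.sub (continuous_rad.comp (continuous_Hs s))
    exact hbase.rpow_const (fun z => Or.inl (ne_of_gt (Hs_weight_pos hs0 z)))
  have hu_c : Continuous u := hφ.continuous.comp (continuous_Hs s)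
  have hu1_c : Continuous u₁ := (contDiff_boost hφ 0).continuous.comp (continuous_Hs s)
  have hu2_c : Continuous u₂ := (contDiff_boost hφ 1).continuous.comp (continuous_Hs s)
  have hu21_c : Continuous u₂₁ :=
    (contDiff_boost (contDiff_boost hφ 0) 1).continuous.comp (continuous_Hs s)
  -- vanishing
  have hvu : ∀ z : ℝ × ℝ, s^2 ≤ max |z.1| |z.2| → u z = 0 :=
    fun z hz => hsupp _ (Hs_not_in_coneK hs0 z hz)
  have hvu1 : ∀ z : ℝ × ℝ, s^2 ≤ max |z.1| |z.2| → u₁ z = 0 :=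
    fun z hz => boost_vanish hφ hsupp 0 _ (Hs_not_in_coneK hs0 z hz)
  have hvu2 : ∀ z : ℝ × ℝ, s^2 ≤ max |z.1| |z.2| → u₂ z = 0 :=
    fun z hz => boost_vanish hφ hsupp 1 _ (Hs_not_in_coneK hs0 z hz)
  have hvu21 : ∀ z : ℝ × ℝ, s^2 ≤ max |z.1| |z.2| → u₂₁ z = 0 :=
    fun z hz => boost_vanish (contDiff_boost hφ 0) (boost_vanish hφ hsupp 0) 1 _
      (Hs_not_in_coneK hs0 z hz)
  -- the P functions
  set P₀ : ℝ × ℝ → ℝ := fun z => Wf z * |u z| / Tf z with hP0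
  set P₁ : ℝ × ℝ → ℝ := fun z => Wf z * |u₁ z| / Tf z with hP1
  set P₂ : ℝ × ℝ → ℝ := fun z => Wf z * |u₂ z| / Tf z with hP2
  set P₂₁ : ℝ × ℝ → ℝ := fun z => Wf z * |u₂₁ z| / Tf z with hP21
  have hP0_c : Continuous P₀ := (hW_c.mul hu_c.abs).div hT_c hTne
  have hP1_c : Continuous P₁ := (hW_c.mul hu1_c.abs).div hT_c hTne
  have hP2_c : Continuous P₂ := (hW_c.mul hu2_c.abs).div hT_c hTne
  have hP21_c : Continuous P₂₁ := (hW_c.mul hu21_c.abs).div hT_c hTne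
  have hvP0 : ∀ z : ℝ × ℝ, s^2 ≤ max |z.1| |z.2| → P₀ z = 0 := by
    intro z hz; simp [hP0, hvu z hz]
  have hvP1 : ∀ z : ℝ × ℝ, s^2 ≤ max |z.1| |z.2| → P₁ z = 0 := by
    intro z hz; simp [hP1, hvu1 z hz]
  have hvP2 : ∀ z : ℝ × ℝ, s^2 ≤ max |z.1| |z.2| → P₂ z = 0 := by
    intro z hz; simp [hP2, hvu2 z hz]
  have hvP21 : ∀ z : ℝ × ℝ, s^2 ≤ max |z.1| |z.2| → P₂₁ z = 0 := by
    intro z hz; simp [hP21, hvu21 z hz]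
  have hP0_m : MemLp P₀ 2 (volume : Measure (ℝ × ℝ)) :=
    hP0_c.memLp_of_hasCompactSupport (hcs2d hvP0)
  have hP1_m : MemLp P₁ 2 (volume : Measure (ℝ × ℝ)) :=
    hP1_c.memLp_of_hasCompactSupport (hcs2d hvP1)
  have hP2_m : MemLp P₂ 2 (volume : Measure (ℝ × ℝ)) :=
    hP2_c.memLp_of_hasCompactSupport (hcs2d hvP2)
  have hP21_m : MemLp P₂₁ 2 (volume : Measure (ℝ × ℝ)) :=
    hP21_c.memLp_of_hasCompactSupport (hcs2d hvP21)
  have hP0_nn : ∀ z, 0 ≤ P₀ z := fun z => by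
    have := hWpos z; have := hTpos z; positivity
  have hP1_nn : ∀ z, 0 ≤ P₁ z := fun z => by
    have := hWpos z; have := hTpos z; positivity
  have hP2_nn : ∀ z, 0 ≤ P₂ z := fun z => by
    have := hWpos z; have := hTpos z; positivity
  have hP21_nn : ∀ z, 0 ≤ P₂₁ z := fun z => by
    have := hWpos z; have := hTpos z; positivity
  -- derivatives
  have hd1 : ∀ a b : ℝ, HasDerivAt (fun a' => u (a', b)) (u₁ (a, b) / Tf (a, b)) a :=
    fun a b => derivH_fst hs0 hφ a b
  have hd2 : ∀ a b : ℝ, HasDerivAt (fun b' => u (a, b')) (u₂ (a, b) / Tf (a, b)) b :=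
    fun a b => derivH_snd hs0 hφ a b
  have hd21 : ∀ a b : ℝ, HasDerivAt (fun b' => u₁ (a, b')) (u₂₁ (a, b) / Tf (a, b)) b :=
    fun a b => derivH_snd hs0 (contDiff_boost hφ 0) a b
  have hdT : ∀ a b : ℝ, HasDerivAt (fun b' => Tf (a, b')) (b / Tf (a, b)) b :=
    fun a b => derivT_snd hs0 a b
  -- G and its derivatives
  set G : ℝ × ℝ → ℝ := fun z => (u z)^2 with hG
  set G₁ : ℝ × ℝ → ℝ := fun z => 2 * u z * u₁ z / Tf z with hG1def
  set G₁₂ : ℝ × ℝ → ℝ := fun z =>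
    2 * (u₂ z * u₁ z) / (Tf z)^2 + 2 * (u z * u₂₁ z) / (Tf z)^2
      - 2 * (u z * u₁ z * z.2) / (Tf z)^3 with hG12def
  have hG1 : ∀ a b : ℝ, HasDerivAt (fun a' => G (a', b)) (G₁ (a, b)) a := by
    intro a b
    have h := (hd1 a b).pow 2
    refine h.congr_deriv (Eq.symm ?_)
    simp only [hG1def]
    have := hTne (a, b)
    field_simp
    push_cast
    ring
  have hG12 : ∀ a b : ℝ, HasDerivAt (fun b' => G₁ (a, b')) (G₁₂ (a, b)) b := by
    intro a b
    have hnum : HasDerivAt (fun b' => 2 * u (a, b') * u₁ (a, b'))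
        (2 * (u₂ (a, b) / Tf (a, b)) * u₁ (a, b)
          + 2 * u (a, b) * (u₂₁ (a, b) / Tf (a, b))) b :=
      ((hd2 a b).const_mul 2).mul (hd21 a b)
    have h := hnum.div (hdT a b) (hTne (a, b))
    refine h.congr_deriv (Eq.symm ?_)
    simp only [hG12def]
    have := hTne (a, b)
    field_simp
  have hG1_c : Continuous G₁ := ((continuous_const.mul hu_c).mul hu1_c).div hT_c hTne
  have hG12_c : Continuous G₁₂ := by
    refine Continuous.sub (Continuous.add ?_ ?_) ?_
    · exact (continuous_const.mul (hu2_c.mul hu1_c)).div (hT_c.pow 2)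
        (fun z => pow_ne_zero 2 (hTne z))
    · exact (continuous_const.mul (hu_c.mul hu21_c)).div (hT_c.pow 2)
        (fun z => pow_ne_zero 2 (hTne z))
    · exact (continuous_const.mul ((hu_c.mul hu1_c).mul continuous_snd)).div (hT_c.pow 3)
        (fun z => pow_ne_zero 3 (hTne z))
  have hvG : ∀ z : ℝ × ℝ, s^2 ≤ max |z.1| |z.2| → G z = 0 := by
    intro z hz; simp [hG, hvu z hz]
  have hvG1 : ∀ z : ℝ × ℝ, s^2 ≤ max |z.1| |z.2| → G₁ z = 0 := by
    intro z hz; simp [hG1def, hvu z hz]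
  have hvG12 : ∀ z : ℝ × ℝ, s^2 ≤ max |z.1| |z.2| → G₁₂ z = 0 := by
    intro z hz; simp [hG12def, hvu z hz, hvu2 z hz]
  -- FTC bound
  have key1 := twoD_bound hG1 hG12 hG1_c hG12_c hvG hvG1 hvG12 z₀
  -- weighted bound
  have hWrhs_int : Integrable (fun z => (Wf z)^2 * |G₁₂ z|) :=
    ((hW_c.pow 2).mul hG12_c.abs).integrable_of_hasCompactSupport
      (hcs2d (M := s^2) (fun z hz => by simp [hvG12 z hz]))
  have key2 : (Wf z₀)^2 * |G z₀| ≤ ∫ z : ℝ × ℝ, (Wf z)^2 * |G₁₂ z| := by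
    calc (Wf z₀)^2 * |G z₀|
        ≤ (Wf z₀)^2 * ∫ z : ℝ × ℝ, Set.indicator
            {z : ℝ × ℝ | |z₀.1| ≤ |z.1| ∧ |z₀.2| ≤ |z.2|} (fun z => |G₁₂ z|) z :=
          mul_le_mul_of_nonneg_left key1 (sq_nonneg _)
      _ = ∫ z : ℝ × ℝ, (Wf z₀)^2 * Set.indicator
            {z : ℝ × ℝ | |z₀.1| ≤ |z.1| ∧ |z₀.2| ≤ |z.2|} (fun z => |G₁₂ z|) z :=
          (integral_const_mul _ _).symm
      _ ≤ ∫ z : ℝ × ℝ, (Wf z)^2 * |G₁₂ z| := by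
          refine integral_mono_of_nonneg ?_ hWrhs_int ?_
          · exact Filter.Eventually.of_forall fun z =>
              mul_nonneg (sq_nonneg _) (Set.indicator_nonneg (fun _ _ => abs_nonneg _) _)
          · refine Filter.Eventually.of_forall fun z => ?_
            dsimp only
            by_cases hz : z ∈ {z : ℝ × ℝ | |z₀.1| ≤ |z.1| ∧ |z₀.2| ≤ |z.2|}
            · rw [Set.indicator_of_mem hz]
              refine mul_le_mul_of_nonneg_right ?_ (abs_nonneg _)
              exact pow_le_pow_left₀ (le_of_lt (hWpos z₀))
                (weight_mono hs0 hγ hz.1 hz.2) 2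
            · rw [Set.indicator_of_notMem hz, mul_zero]
              exact mul_nonneg (sq_nonneg _) (abs_nonneg _)
  -- pointwise bound on the weighted integrand
  have key3 : ∀ z : ℝ × ℝ, (Wf z)^2 * |G₁₂ z|
      ≤ 2 * (P₁ z * P₂ z) + 2 * (P₀ z * P₂₁ z) + 2 * (P₀ z * P₁ z) := by
    intro z
    have ht := hTpos z
    have hw := hWpos z
    have hb : |z.2| ≤ Tf z := Hs_abs_snd_le hs0 z
    have habs : |G₁₂ z| ≤ 2 * (|u₂ z| * |u₁ z|) / (Tf z)^2
        + 2 * (|u z| * |u₂₁ z|) / (Tf z)^2 + 2 * (|u z| * |u₁ z|) / (Tf z)^2 := by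
      have tri : |G₁₂ z| ≤ |2 * (u₂ z * u₁ z) / (Tf z)^2|
          + |2 * (u z * u₂₁ z) / (Tf z)^2| + |2 * (u z * u₁ z * z.2) / (Tf z)^3| := by
        simp only [hG12def]
        calc |2 * (u₂ z * u₁ z) / Tf z ^ 2 + 2 * (u z * u₂₁ z) / Tf z ^ 2
              - 2 * (u z * u₁ z * z.2) / Tf z ^ 3|
            ≤ |2 * (u₂ z * u₁ z) / Tf z ^ 2 + 2 * (u z * u₂₁ z) / Tf z ^ 2|
              + |2 * (u z * u₁ z * z.2) / Tf z ^ 3| := abs_sub _ _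
          _ ≤ _ := by
              have := abs_add_le (2 * (u₂ z * u₁ z) / Tf z ^ 2) (2 * (u z * u₂₁ z) / Tf z ^ 2)
              linarith
      have e1 : |2 * (u₂ z * u₁ z) / (Tf z)^2| = 2 * (|u₂ z| * |u₁ z|) / (Tf z)^2 := by
        rw [abs_div, abs_mul, abs_mul, abs_two, abs_of_pos (pow_pos ht 2)]
      have e2 : |2 * (u z * u₂₁ z) / (Tf z)^2| = 2 * (|u z| * |u₂₁ z|) / (Tf z)^2 := by
        rw [abs_div, abs_mul, abs_mul, abs_two, abs_of_pos (pow_pos ht 2)]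
      have e3 : |2 * (u z * u₁ z * z.2) / (Tf z)^3|
          ≤ 2 * (|u z| * |u₁ z|) / (Tf z)^2 := by
        rw [abs_div, abs_mul, abs_mul, abs_mul, abs_two, abs_of_pos (pow_pos ht 3)]
        rw [div_le_div_iff₀ (pow_pos ht 3) (pow_pos ht 2)]
        have hkey : 0 ≤ 2 * (|u z| * |u₁ z|) * (Tf z ^ 2 * (Tf z - |z.2|)) :=
          mul_nonneg (mul_nonneg (by norm_num) (mul_nonneg (abs_nonneg _) (abs_nonneg _)))
            (mul_nonneg (sq_nonneg _) (sub_nonneg.2 hb))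
        nlinarith [hkey]
      linarith [tri, e3, le_of_eq e1, le_of_eq e2]
    have hEq : (Wf z)^2 * (2 * (|u₂ z| * |u₁ z|) / (Tf z)^2
        + 2 * (|u z| * |u₂₁ z|) / (Tf z)^2 + 2 * (|u z| * |u₁ z|) / (Tf z)^2)
        = 2 * (P₁ z * P₂ z) + 2 * (P₀ z * P₂₁ z) + 2 * (P₀ z * P₁ z) := by
      simp only [hP0, hP1, hP2, hP21]
      field_simp
    calc (Wf z)^2 * |G₁₂ z|
        ≤ (Wf z)^2 * (2 * (|u₂ z| * |u₁ z|) / (Tf z)^2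
          + 2 * (|u z| * |u₂₁ z|) / (Tf z)^2 + 2 * (|u z| * |u₁ z|) / (Tf z)^2) :=
          mul_le_mul_of_nonneg_left habs (sq_nonneg _)
      _ = _ := hEq
  -- integrate key3
  have hint12 : Integrable (fun z => P₁ z * P₂ z) :=
    (hP1_c.mul hP2_c).integrable_of_hasCompactSupport
      (hcs2d (M := s^2) (fun z hz => by simp [hvP1 z hz]))
  have hint021 : Integrable (fun z => P₀ z * P₂₁ z) :=
    (hP0_c.mul hP21_c).integrable_of_hasCompactSupport
      (hcs2d (M := s^2) (fun z hz => by simp [hvP0 z hz]))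
  have hint01 : Integrable (fun z => P₀ z * P₁ z) :=
    (hP0_c.mul hP1_c).integrable_of_hasCompactSupport
      (hcs2d (M := s^2) (fun z hz => by simp [hvP0 z hz]))
  have key4 : ∫ z : ℝ × ℝ, (Wf z)^2 * |G₁₂ z|
      ≤ 2 * (∫ z : ℝ × ℝ, P₁ z * P₂ z) + 2 * (∫ z : ℝ × ℝ, P₀ z * P₂₁ z)
        + 2 * (∫ z : ℝ × ℝ, P₀ z * P₁ z) := by
    have hrhs : Integrable (fun z => 2 * (P₁ z * P₂ z) + 2 * (P₀ z * P₂₁ z)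
        + 2 * (P₀ z * P₁ z)) :=
      ((hint12.const_mul 2).add (hint021.const_mul 2)).add (hint01.const_mul 2)
    have := integral_mono hWrhs_int hrhs key3
    calc ∫ z : ℝ × ℝ, (Wf z)^2 * |G₁₂ z|
        ≤ ∫ z : ℝ × ℝ, (2 * (P₁ z * P₂ z) + 2 * (P₀ z * P₂₁ z) + 2 * (P₀ z * P₁ z)) := this
      _ = _ := by
          have ha : Integrable (fun z : ℝ × ℝ => 2 * (P₁ z * P₂ z)) := by
            exact hint12.const_mul 2
          have hb' : Integrable (fun z : ℝ × ℝ => 2 * (P₀ z * P₂₁ z)) := by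
            exact hint021.const_mul 2
          have hc' : Integrable (fun z : ℝ × ℝ => 2 * (P₀ z * P₁ z)) := by
            exact hint01.const_mul 2
          have hab : Integrable (fun z : ℝ × ℝ => 2 * (P₁ z * P₂ z) + 2 * (P₀ z * P₂₁ z)) := by
            exact ha.add hb'
          have e1 : ∫ z : ℝ × ℝ, (2 * (P₁ z * P₂ z) + 2 * (P₀ z * P₂₁ z) + 2 * (P₀ z * P₁ z))
              = (∫ z : ℝ × ℝ, (2 * (P₁ z * P₂ z) + 2 * (P₀ z * P₂₁ z)))
                + ∫ z : ℝ × ℝ, 2 * (P₀ z * P₁ z) := by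
            exact integral_add hab hc'
          have e2 : ∫ z : ℝ × ℝ, (2 * (P₁ z * P₂ z) + 2 * (P₀ z * P₂₁ z))
              = (∫ z : ℝ × ℝ, 2 * (P₁ z * P₂ z)) + ∫ z : ℝ × ℝ, 2 * (P₀ z * P₂₁ z) := by
            exact integral_add ha hb'
          rw [e1, e2, integral_const_mul, integral_const_mul, integral_const_mul]
  -- Cauchy--Schwarz
  set N₀ : ℝ := Real.sqrt (∫ z : ℝ × ℝ, (P₀ z)^2) with hN0
  set N₁ : ℝ := Real.sqrt (∫ z : ℝ × ℝ, (P₁ z)^2) with hN1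
  set N₂ : ℝ := Real.sqrt (∫ z : ℝ × ℝ, (P₂ z)^2) with hN2
  set N₂₁ : ℝ := Real.sqrt (∫ z : ℝ × ℝ, (P₂₁ z)^2) with hN21
  have cs12 : ∫ z : ℝ × ℝ, P₁ z * P₂ z ≤ N₁ * N₂ :=
    CS_bound hP1_nn hP2_nn hP1_m hP2_m
  have cs021 : ∫ z : ℝ × ℝ, P₀ z * P₂₁ z ≤ N₀ * N₂₁ :=
    CS_bound hP0_nn hP21_nn hP0_m hP21_m
  have cs01 : ∫ z : ℝ × ℝ, P₀ z * P₁ z ≤ N₀ * N₁ :=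
    CS_bound hP0_nn hP1_nn hP0_m hP1_m
  have hN0_nn : 0 ≤ N₀ := Real.sqrt_nonneg _
  have hN1_nn : 0 ≤ N₁ := Real.sqrt_nonneg _
  have hN2_nn : 0 ≤ N₂ := Real.sqrt_nonneg _
  have hN21_nn : 0 ≤ N₂₁ := Real.sqrt_nonneg _
  -- assemble the square bound
  have hsq : (Wf z₀ * |u z₀|)^2 ≤ (N₀ + N₁ + N₂ + N₂₁)^2 := by
    have e : (Wf z₀ * |u z₀|)^2 = (Wf z₀)^2 * |G z₀| := by
      simp only [hG]
      rw [abs_of_nonneg (sq_nonneg (u z₀)), mul_pow, sq_abs]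
    rw [e]
    have chain : (Wf z₀)^2 * |G z₀| ≤ 2 * (N₁ * N₂) + 2 * (N₀ * N₂₁) + 2 * (N₀ * N₁) := by
      calc (Wf z₀)^2 * |G z₀| ≤ ∫ z : ℝ × ℝ, (Wf z)^2 * |G₁₂ z| := key2
        _ ≤ 2 * (∫ z : ℝ × ℝ, P₁ z * P₂ z) + 2 * (∫ z : ℝ × ℝ, P₀ z * P₂₁ z)
            + 2 * (∫ z : ℝ × ℝ, P₀ z * P₁ z) := key4
        _ ≤ _ := by
            have h1 : 2 * (∫ z : ℝ × ℝ, P₁ z * P₂ z) ≤ 2 * (N₁ * N₂) := by linarith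
            have h2 : 2 * (∫ z : ℝ × ℝ, P₀ z * P₂₁ z) ≤ 2 * (N₀ * N₂₁) := by linarith
            have h3 : 2 * (∫ z : ℝ × ℝ, P₀ z * P₁ z) ≤ 2 * (N₀ * N₁) := by linarith
            linarith
    refine le_trans chain ?_
    nlinarith [sq_nonneg (N₀ - N₁), sq_nonneg (N₀ - N₂), sq_nonneg (N₀ - N₂₁),
      sq_nonneg (N₁ - N₂), sq_nonneg (N₁ - N₂₁), sq_nonneg (N₂ - N₂₁),
      mul_nonneg hN0_nn hN1_nn, mul_nonneg hN0_nn hN2_nn, mul_nonneg hN0_nn hN21_nn,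
      mul_nonneg hN1_nn hN2_nn, mul_nonneg hN1_nn hN21_nn, mul_nonneg hN2_nn hN21_nn]
  have hmain : Wf z₀ * |u z₀| ≤ N₀ + N₁ + N₂ + N₂₁ := by
    have hl : 0 ≤ Wf z₀ * |u z₀| := mul_nonneg (le_of_lt (hWpos z₀)) (abs_nonneg _)
    have hr : 0 ≤ N₀ + N₁ + N₂ + N₂₁ := by linarith
    nlinarith [hsq]
  -- identify the N's with the stated integrals
  have eN : ∀ (v : ℝ × ℝ → ℝ), Real.sqrt (∫ z : ℝ × ℝ, (Wf z * |v z| / Tf z)^2)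
      = Real.sqrt (∫ z : ℝ × ℝ, (Wf z / Tf z * v z)^2) := by
    intro v
    congr 1
    refine integral_congr_ae (Filter.Eventually.of_forall fun z => ?_)
    show (Wf z * |v z| / Tf z)^2 = (Wf z / Tf z * v z)^2
    rw [show Wf z * |v z| / Tf z = Wf z / Tf z * |v z| from by ring, mul_pow, mul_pow, sq_abs]
  calc Wf z₀ * |u z₀| ≤ N₀ + N₁ + N₂ + N₂₁ := hmain
    _ = _ := by
      rw [hN0, hN1, hN2, hN21]
      rw [eN u, eN u₁, eN u₂, eN u₂₁]

lemma L2f_nonneg (s : ℝ) (g : Pt → ℝ) : 0 ≤ L2f s g := Real.sqrt_nonneg _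

end KSaux

/-- **Weighted Klainerman–Sobolev estimate on hyperboloids** (estimate (4.17)). For `γ ≥ 0`,
smooth `φ` supported in the cone `K` and `s ≥ 2`:
`sup_{H_s} |s (t−r)^{−γ} φ| ≤ C Σ_{|J|≤2} ‖(s/t)(t−r)^{−γ} L^J φ‖_{L²_f(H_s)}`. -/
theorem weighted_klainerman_sobolev_hyperboloid (γ : ℝ) (hγ : 0 ≤ γ) :
    ∃ C : ℝ, 0 < C ∧
      ∀ φ : Pt → ℝ, ContDiff ℝ (⊤ : ℕ∞) φ → (∀ p, p ∉ coneK → φ p = 0) →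
      ∀ s : ℝ, 2 ≤ s →
      ∀ p : Pt, 0 < p 0 → (p 0)^2 - (rad p)^2 = s^2 →
        |s * (p 0 - rad p) ^ (-γ) * φ p|
          ≤ C * (L2f s (fun q => (s / q 0) * (q 0 - rad q) ^ (-γ) * φ q)
              + (∑ a : Fin 2, L2f s (fun q => (s / q 0) * (q 0 - rad q) ^ (-γ) * boost a φ q))
              + ∑ a : Fin 2, ∑ b : Fin 2,
                  L2f s (fun q => (s / q 0) * (q 0 - rad q) ^ (-γ) * boost a (boost b φ) q)) := by
  refine ⟨1, one_pos, ?_⟩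
  intro φ hφ hsupp s hs p hp0 hps
  have hs0 : (0:ℝ) < s := by linarith
  set z₀ : ℝ × ℝ := (p 1, p 2) with hz0
  have hpH : p = Hs s z₀ := by
    funext i
    fin_cases i
    · show p 0 = Real.sqrt (s^2 + (p 1)^2 + (p 2)^2)
      have hr2 : (rad p)^2 = (p 1)^2 + (p 2)^2 := Real.sq_sqrt (by positivity)
      have he : s^2 + (p 1)^2 + (p 2)^2 = (p 0)^2 := by linarith [hr2, hps]
      rw [he, Real.sqrt_sq hp0.le]
    · rfl
    · rfl
  have core := core_estimate γ hγ s hs0 φ hφ hsupp z₀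
  have hWpos : 0 < (p 0 - rad p) ^ (-γ) := by
    rw [hpH]; exact Real.rpow_pos_of_pos (Hs_weight_pos hs0 z₀) _
  have hLHS : |s * (p 0 - rad p) ^ (-γ) * φ p|
      = s * (((Hs s z₀ 0 - rad (Hs s z₀)) ^ (-γ)) * |φ (Hs s z₀)|) := by
    rw [abs_mul, abs_mul, abs_of_pos hs0, abs_of_pos hWpos, mul_assoc]
    rw [hpH]
  rw [hLHS]
  -- expand the sums
  rw [Fin.sum_univ_two, Fin.sum_univ_two, Fin.sum_univ_two, Fin.sum_univ_two]
  -- identify the four needed L2f norms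
  have e0 := L2f_eq s hs0 γ φ
  have e1 := L2f_eq s hs0 γ (boost 0 φ)
  have e2 := L2f_eq s hs0 γ (boost 1 φ)
  have e10 := L2f_eq s hs0 γ (boost 1 (boost 0 φ))
  have hmul := mul_le_mul_of_nonneg_left core hs0.le
  have h00 := L2f_nonneg s (fun q => (s / q 0) * (q 0 - rad q) ^ (-γ) * boost 0 (boost 0 φ) q)
  have h01 := L2f_nonneg s (fun q => (s / q 0) * (q 0 - rad q) ^ (-γ) * boost 0 (boost 1 φ) q)
  have h11 := L2f_nonneg s (fun q => (s / q 0) * (q 0 - rad q) ^ (-γ) * boost 1 (boost 1 φ) q)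
  rw [one_mul]
  calc s * ((Hs s z₀ 0 - rad (Hs s z₀)) ^ (-γ) * |φ (Hs s z₀)|)
      ≤ s * (Real.sqrt (∫ z : ℝ × ℝ,
            ((Hs s z 0 - rad (Hs s z)) ^ (-γ) / Hs s z 0 * φ (Hs s z))^2)
          + Real.sqrt (∫ z : ℝ × ℝ,
            ((Hs s z 0 - rad (Hs s z)) ^ (-γ) / Hs s z 0 * boost 0 φ (Hs s z))^2)
          + Real.sqrt (∫ z : ℝ × ℝ,
            ((Hs s z 0 - rad (Hs s z)) ^ (-γ) / Hs s z 0 * boost 1 φ (Hs s z))^2)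
          + Real.sqrt (∫ z : ℝ × ℝ,
            ((Hs s z 0 - rad (Hs s z)) ^ (-γ) / Hs s z 0
              * boost 1 (boost 0 φ) (Hs s z))^2)) := hmul
    _ ≤ _ := by
        rw [mul_add, mul_add, mul_add]
        rw [← e0, ← e1, ← e2, ← e10]
        linarith [h00, h01, h11]
end
end

section
/- Pointwise bound on second derivatives of a wave field. There exists a universal constant C > 0 such that if φ is a C² function supported in K_{[s₀, s₁]}, vanishing near the conical boundary ∂K, and satisfying −□φ = f there, then for all α, β ∈ {0,1,2} and all (t,x) ∈ K_{[s₀, s₁]}: |∂_α ∂_β φ(t,x)| ≤ C [ (t − |x|)^{−1} ( Σ_{a ∈ {1,2}, γ ∈ {0,1,2}} |∂_γ L_a φ| + Σ_{γ ∈ {0,1,2}} |∂_γ φ| ) + t (t − |x|)^{−1} |f| ]. -/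
noncomputable section

open MeasureTheory

lemma hasFDerivAt_pd (φ : Pt → ℝ) (hφ : ContDiff ℝ 2 φ) (β : Fin 3) (p : Pt) :
    HasFDerivAt (pd β φ)
      ((ContinuousLinearMap.apply ℝ ℝ (Pi.single β (1:ℝ))).comp
        (fderiv ℝ (fderiv ℝ φ) p)) p := by
  have h1 : DifferentiableAt ℝ (fderiv ℝ φ) p :=
    ((hφ.fderiv_right (n := 2) (m := 1) (by norm_num)).differentiable one_ne_zero) p
  exact (ContinuousLinearMap.apply ℝ ℝ (Pi.single β (1:ℝ))).hasFDerivAt.comp p h1.hasFDerivAt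

lemma pd_pd_eq (φ : Pt → ℝ) (hφ : ContDiff ℝ 2 φ) (α β : Fin 3) (p : Pt) :
    pd α (pd β φ) p = fderiv ℝ (fderiv ℝ φ) p (Pi.single α 1) (Pi.single β 1) := by
  have := (hasFDerivAt_pd φ hφ β p).fderiv
  simp only [pd, this]; rfl

lemma pd_pd_symm (φ : Pt → ℝ) (hφ : ContDiff ℝ 2 φ) (α β : Fin 3) (p : Pt) :
    pd α (pd β φ) p = pd β (pd α φ) p := by
  rw [pd_pd_eq φ hφ, pd_pd_eq φ hφ]
  exact (hφ.contDiffAt.isSymmSndFDerivAt (by simp [minSmoothness_of_isRCLikeNormedField])) _ _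

lemma pd_boost (φ : Pt → ℝ) (hφ : ContDiff ℝ 2 φ) (a : Fin 2) (γ : Fin 3) (p : Pt) :
    pd γ (boost a φ) p
      = (Pi.single γ (1:ℝ) : Pt) a.succ * pd 0 φ p + p a.succ * pd γ (pd 0 φ) p
        + ((Pi.single γ (1:ℝ) : Pt) 0 * pd a.succ φ p + p 0 * pd γ (pd a.succ φ) p) := by
  have hD0 := hasFDerivAt_pd φ hφ 0 p
  have hDa := hasFDerivAt_pd φ hφ a.succ p
  have hc1 := hasFDerivAt_apply (𝕜 := ℝ) (F' := fun _ : Fin 3 => ℝ) a.succ p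
  have hc0 := hasFDerivAt_apply (𝕜 := ℝ) (F' := fun _ : Fin 3 => ℝ) 0 p
  have h := ((hc1.mul hD0).add (hc0.mul hDa))
  have h2 : pd γ (boost a φ) p = _ := congrFun (congrArg _ h.fderiv) (Pi.single γ 1)
  rw [h2]
  simp only [ContinuousLinearMap.add_apply, ContinuousLinearMap.coe_smul',
    ContinuousLinearMap.coe_comp', Pi.smul_apply, Function.comp_apply,
    ContinuousLinearMap.apply_apply, ContinuousLinearMap.proj_apply, smul_eq_mul,
    ← pd_pd_eq φ hφ]
  ring

set_option maxHeartbeats 1000000 in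
/-- **Pointwise bound on second derivatives of a wave field** (Lemma 4.9). If `φ` is a `C²`
function supported in the slab `K_{[s₀,s₁]}`, vanishing near the conical boundary, and
`−□φ = f` there, then for all `α, β ∈ {0,1,2}` and all points of the slab:
`|∂_α∂_βφ| ≤ C[(t−|x|)^{−1}(Σ|∂ L φ| + Σ|∂φ|) + t(t−|x|)^{−1}|f|]`. -/
theorem second_derivative_pointwise_bound :
    ∃ C : ℝ, 0 < C ∧
      ∀ s0 s1 : ℝ, 1 < s0 → s0 ≤ s1 →
      ∀ φ f : Pt → ℝ,
        ContDiff ℝ 2 φ →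
        (∀ p, p ∉ slab s0 s1 → φ p = 0) →
        VanishNearBdry s0 s1 φ →
        (∀ p ∈ slab s0 s1, negBox φ p = f p) →
        ∀ α β : Fin 3, ∀ p ∈ slab s0 s1,
          |pd α (pd β φ) p|
            ≤ C * ((p 0 - rad p)⁻¹ *
                  ((∑ a : Fin 2, ∑ γ : Fin 3, |pd γ (boost a φ) p|)
                    + ∑ γ : Fin 3, |pd γ φ p|)
                + (p 0) * (p 0 - rad p)⁻¹ * |f p|) := by
  refine ⟨4, by norm_num, ?_⟩
  intro s0 s1 hs0 hs01 φ f hφ _ _ hwave α β p hp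
  have hw := hwave p hp

  obtain ⟨hK, -, -⟩ := hp
  -- boost identities, canonical form
  have e00 := pd_boost φ hφ 0 0 p
  have e01 := pd_boost φ hφ 0 1 p
  have e02 := pd_boost φ hφ 0 2 p
  have e10 := pd_boost φ hφ 1 0 p
  have e11 := pd_boost φ hφ 1 1 p
  have e12 := pd_boost φ hφ 1 2 p
  have s01 := pd_pd_symm φ hφ 1 0 p
  have s02 := pd_pd_symm φ hφ 2 0 p
  have s12 := pd_pd_symm φ hφ 2 1 p
  simp only [show (0:Fin 2).succ = 1 from rfl, show (1:Fin 2).succ = 2 from rfl,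
    Pi.single_apply] at e00 e01 e02 e10 e11 e12
  norm_num [show ((1:Fin 3) = 2) = False from by decide, show ((0:Fin 3) = 2) = False from by decide,
    show ((2:Fin 3) = 0) = False from by decide, show ((2:Fin 3) = 1) = False from by decide,
    show ((0:Fin 3) = 1) = False from by decide, show ((1:Fin 3) = 0) = False from by decide]
    at e00 e01 e02 e10 e11 e12
  rw [s01] at e01 e11
  rw [s02] at e02 e12
  rw [s12] at e02
  -- basic geometry of the point
  have hr0 : 0 ≤ rad p := Real.sqrt_nonneg _
  have ht0 : (0:ℝ) < p 0 := by linarith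
  have htr : (0:ℝ) < p 0 - rad p := by linarith
  have hinv : (0:ℝ) ≤ (p 0 - rad p)⁻¹ := inv_nonneg.2 htr.le
  have hr2 : (rad p)^2 = (p 1)^2 + (p 2)^2 := Real.sq_sqrt (by positivity)
  have hx1 : |p 1| ≤ rad p := by
    rw [rad, ← Real.sqrt_sq_eq_abs]
    exact Real.sqrt_le_sqrt (by linarith [sq_nonneg (p 2)])
  have hx2 : |p 2| ≤ rad p := by
    rw [rad, ← Real.sqrt_sq_eq_abs]
    exact Real.sqrt_le_sqrt (by linarith [sq_nonneg (p 1)])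
  have hD : (0:ℝ) < (p 0)^2 - (rad p)^2 := by
    have h := mul_pos htr (show (0:ℝ) < p 0 + rad p by linarith)
    calc (0:ℝ) < (p 0 - rad p) * (p 0 + rad p) := h
      _ = (p 0)^2 - (rad p)^2 := by ring
  rw [negBox] at hw
  -- abbreviations
  set u00 := pd 0 (pd 0 φ) p with hd00
  set u01 := pd 0 (pd 1 φ) p with hd01
  set u02 := pd 0 (pd 2 φ) p with hd02
  set u11 := pd 1 (pd 1 φ) p with hd11
  set u12 := pd 1 (pd 2 φ) p with hd12
  set u22 := pd 2 (pd 2 φ) p with hd22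
  set b0 := pd 0 φ p with hdb0
  set b1 := pd 1 φ p with hdb1
  set b2 := pd 2 φ p with hdb2
  set A00 := pd 0 (boost 0 φ) p with hdA00
  set A01 := pd 1 (boost 0 φ) p with hdA01
  set A02 := pd 2 (boost 0 φ) p with hdA02
  set A10 := pd 0 (boost 1 φ) p with hdA10
  set A11 := pd 1 (boost 1 φ) p with hdA11
  set A12 := pd 2 (boost 1 φ) p with hdA12
  clear_value u00 u01 u02 u11 u12 u22 b0 b1 b2 A00 A01 A02 A10 A11 A12
  set S := |A00| + (|A01| + |A02|) + (|A10| + (|A11| + |A12|)) + (|b0| + (|b1| + |b2|)) with hSdef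
  set Q := (p 0 - rad p)⁻¹ * S + p 0 * (p 0 - rad p)⁻¹ * |f p| with hQdef
  clear_value S Q
  have hSnn : 0 ≤ S := by
    rw [hSdef]
    refine add_nonneg (add_nonneg (add_nonneg (abs_nonneg _) (add_nonneg (abs_nonneg _)
      (abs_nonneg _))) (add_nonneg (abs_nonneg _) (add_nonneg (abs_nonneg _) (abs_nonneg _))))
      (add_nonneg (abs_nonneg _) (add_nonneg (abs_nonneg _) (abs_nonneg _)))
  have hQnn : 0 ≤ Q := by
    rw [hQdef]
    refine add_nonneg (mul_nonneg hinv hSnn) ?_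
    exact mul_nonneg (mul_nonneg ht0.le hinv) (abs_nonneg _)
  have hSQ : S ≤ p 0 * Q := by
    have h5 : S * 1 ≤ S * (p 0 * (p 0 - rad p)⁻¹) := by
      apply mul_le_mul_of_nonneg_left _ hSnn
      rw [← div_eq_mul_inv, le_div_iff₀ htr]
      linarith
    have h6 : 0 ≤ p 0 * (p 0 * (p 0 - rad p)⁻¹ * |f p|) :=
      mul_nonneg ht0.le (mul_nonneg (mul_nonneg ht0.le hinv) (abs_nonneg _))
    rw [hQdef]
    linarith [h5, h6]
  -- the bound on u00
  have key : ((p 0)^2 - (rad p)^2) * u00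
      = (p 0)^2 * f p + p 0 * A01 + p 0 * A12 - p 1 * A00 - p 2 * A10
        + p 1 * b1 + p 2 * b2 - 2 * p 0 * b0 := by
    linear_combination (p 0)^2 * hw - (p 0) * e01 - (p 0) * e12 + (p 1) * e00
      + (p 2) * e10 - u00 * hr2
  have habs8 : |((p 0)^2 - (rad p)^2) * u00|
      ≤ (p 0)^2 * |f p| + p 0 * |A01| + p 0 * |A12| + rad p * |A00| + rad p * |A10|
        + rad p * |b1| + rad p * |b2| + 2 * p 0 * |b0| := by
    rw [key, abs_le]
    have l1 := le_abs_self (f p); have l1' := neg_abs_le (f p)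
    have l2 := le_abs_self A01; have l2' := neg_abs_le A01
    have l3 := le_abs_self A12; have l3' := neg_abs_le A12
    have l4 := abs_le.1 ((abs_mul (p 1) A00).le.trans
      (mul_le_mul_of_nonneg_right hx1 (abs_nonneg _)))
    have l5 := abs_le.1 ((abs_mul (p 2) A10).le.trans
      (mul_le_mul_of_nonneg_right hx2 (abs_nonneg _)))
    have l6 := abs_le.1 ((abs_mul (p 1) b1).le.trans
      (mul_le_mul_of_nonneg_right hx1 (abs_nonneg _)))
    have l7 := abs_le.1 ((abs_mul (p 2) b2).le.trans
      (mul_le_mul_of_nonneg_right hx2 (abs_nonneg _)))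
    have l8 := le_abs_self b0; have l8' := neg_abs_le b0
    constructor <;> linarith [mul_le_mul_of_nonneg_left l1 (sq_nonneg (p 0)),
      mul_le_mul_of_nonneg_left l1' (sq_nonneg (p 0)),
      mul_le_mul_of_nonneg_left l2 ht0.le, mul_le_mul_of_nonneg_left l2' ht0.le,
      mul_le_mul_of_nonneg_left l3 ht0.le, mul_le_mul_of_nonneg_left l3' ht0.le,
      mul_le_mul_of_nonneg_left l8 ht0.le, mul_le_mul_of_nonneg_left l8' ht0.le,
      l4.1, l4.2, l5.1, l5.2, l6.1, l6.2, l7.1, l7.2]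
  have hu00 : |u00| ≤ 2 * Q := by
    have hrw : |((p 0)^2 - (rad p)^2) * u00| = ((p 0)^2 - (rad p)^2) * |u00| := by
      rw [abs_mul, abs_of_pos hD]
    rw [hrw] at habs8
    have hDinv : ((p 0)^2 - (rad p)^2) * (p 0 - rad p)⁻¹ = p 0 + rad p := by
      field_simp
      ring
    have hexp : ((p 0)^2 - (rad p)^2) * (2 * Q)
        = 2 * (p 0 + rad p) * S + 2 * p 0 * (p 0 + rad p) * |f p| := by
      rw [hQdef]
      field_simp
      ring
    have hBQ : (p 0)^2 * |f p| + p 0 * |A01| + p 0 * |A12| + rad p * |A00| + rad p * |A10|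
        + rad p * |b1| + rad p * |b2| + 2 * p 0 * |b0|
        ≤ ((p 0)^2 - (rad p)^2) * (2 * Q) := by
      rw [hexp]
      have m1 : (p 0)^2 * |f p| ≤ 2 * p 0 * (p 0 + rad p) * |f p| := by
        apply mul_le_mul_of_nonneg_right _ (abs_nonneg _)
        linarith [mul_nonneg ht0.le ht0.le, mul_nonneg ht0.le hr0]
      have m2 : p 0 * |A01| ≤ (p 0 + rad p) * |A01| :=
        mul_le_mul_of_nonneg_right (by linarith) (abs_nonneg _)
      have m3 : p 0 * |A12| ≤ (p 0 + rad p) * |A12| :=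
        mul_le_mul_of_nonneg_right (by linarith) (abs_nonneg _)
      have m4 : rad p * |A00| ≤ (p 0 + rad p) * |A00| :=
        mul_le_mul_of_nonneg_right (by linarith) (abs_nonneg _)
      have m5 : rad p * |A10| ≤ (p 0 + rad p) * |A10| :=
        mul_le_mul_of_nonneg_right (by linarith) (abs_nonneg _)
      have m6 : rad p * |b1| ≤ (p 0 + rad p) * |b1| :=
        mul_le_mul_of_nonneg_right (by linarith) (abs_nonneg _)
      have m7 : rad p * |b2| ≤ (p 0 + rad p) * |b2| :=
        mul_le_mul_of_nonneg_right (by linarith) (abs_nonneg _)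
      have m8 : 2 * p 0 * |b0| ≤ 2 * (p 0 + rad p) * |b0| :=
        mul_le_mul_of_nonneg_right (by linarith) (abs_nonneg _)
      have n1 : 0 ≤ (p 0 + rad p) * |A02| := mul_nonneg (by linarith) (abs_nonneg _)
      have n2 : 0 ≤ (p 0 + rad p) * |A11| := mul_nonneg (by linarith) (abs_nonneg _)
      have n3 : 0 ≤ (p 0 + rad p) * |A01| := mul_nonneg (by linarith) (abs_nonneg _)
      have n4 : 0 ≤ (p 0 + rad p) * |A12| := mul_nonneg (by linarith) (abs_nonneg _)
      have n5 : 0 ≤ (p 0 + rad p) * |b0| := mul_nonneg (by linarith) (abs_nonneg _)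
      have n6 : 0 ≤ (p 0 + rad p) * |A00| := mul_nonneg (by linarith) (abs_nonneg _)
      have n7 : 0 ≤ (p 0 + rad p) * |A10| := mul_nonneg (by linarith) (abs_nonneg _)
      have n8 : 0 ≤ (p 0 + rad p) * |b1| := mul_nonneg (by linarith) (abs_nonneg _)
      have n9 : 0 ≤ (p 0 + rad p) * |b2| := mul_nonneg (by linarith) (abs_nonneg _)
      rw [hSdef]
      linarith [m1, m2, m3, m4, m5, m6, m7, m8, n1, n2, n3, n4, n5, n6, n7, n8, n9]
    have := habs8.trans hBQ
    exact le_of_mul_le_mul_left (by linarith) hD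
  -- generic step: from  p0 * u = X - c * v - w  with |c| ≤ rad p, |v| ≤ k*Q,
  -- |X| + |w| ≤ S, we get |u| ≤ (k+1)*Q.
  have step : ∀ u v X w c k : ℝ, p 0 * u = X - c * v - w → |c| ≤ rad p → |v| ≤ k * Q →
      |X| + |w| ≤ S → 0 ≤ k → |u| ≤ (k + 1) * Q := by
    intro u v X w c k he hc hv hXw hk
    have h1 : p 0 * |u| = |X - c * v - w| := by
      rw [← abs_of_pos ht0, ← abs_mul, he]
    have l4 := abs_le.1 ((abs_mul c v).le.trans
      (mul_le_mul_of_nonneg_right hc (abs_nonneg v)))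
    have h2 : |X - c * v - w| ≤ |X| + rad p * |v| + |w| := by
      rw [abs_le]
      constructor <;>
        linarith [le_abs_self X, neg_abs_le X, le_abs_self w, neg_abs_le w, l4.1, l4.2]
    have h3 : rad p * |v| ≤ p 0 * (k * Q) := by
      calc rad p * |v| ≤ rad p * (k * Q) := mul_le_mul_of_nonneg_left hv hr0
        _ ≤ p 0 * (k * Q) :=
          mul_le_mul_of_nonneg_right (by linarith) (mul_nonneg hk hQnn)
    have h4 : |X| + |w| ≤ p 0 * Q := hXw.trans hSQ
    have h5 : p 0 * |u| ≤ p 0 * ((k + 1) * Q) := by linarith [h1, h2, h3, h4]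
    exact le_of_mul_le_mul_left h5 ht0
  have hu01 : |u01| ≤ 3 * Q := by
    have := step u01 u00 A00 b1 (p 1) 2 (by linarith [e00]) hx1 hu00
      (by rw [hSdef]
          linarith [abs_nonneg A01, abs_nonneg A02, abs_nonneg A10, abs_nonneg A11,
            abs_nonneg A12, abs_nonneg b0, abs_nonneg b2]) (by norm_num)
    linarith
  have hu02 : |u02| ≤ 3 * Q := by
    have := step u02 u00 A10 b2 (p 2) 2 (by linarith [e10]) hx2 hu00
      (by rw [hSdef]
          linarith [abs_nonneg A00, abs_nonneg A01, abs_nonneg A02, abs_nonneg A11,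
            abs_nonneg A12, abs_nonneg b0, abs_nonneg b1]) (by norm_num)
    linarith
  have hu11 : |u11| ≤ 4 * Q := by
    have := step u11 u01 A01 b0 (p 1) 3 (by linarith [e01]) hx1 hu01
      (by rw [hSdef]
          linarith [abs_nonneg A00, abs_nonneg A02, abs_nonneg A10, abs_nonneg A11,
            abs_nonneg A12, abs_nonneg b1, abs_nonneg b2]) (by norm_num)
    linarith
  have hu12 : |u12| ≤ 4 * Q := by
    have := step u12 u01 A11 0 (p 2) 3 (by linarith [e11]) hx2 hu01
      (by rw [hSdef, abs_zero]
          linarith [abs_nonneg A00, abs_nonneg A01, abs_nonneg A02, abs_nonneg A10,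
            abs_nonneg A12, abs_nonneg b0, abs_nonneg b1, abs_nonneg b2]) (by norm_num)
    linarith
  have hu22 : |u22| ≤ 4 * Q := by
    have := step u22 u02 A12 b0 (p 2) 3 (by linarith [e12]) hx2 hu02
      (by rw [hSdef]
          linarith [abs_nonneg A00, abs_nonneg A01, abs_nonneg A02, abs_nonneg A10,
            abs_nonneg A11, abs_nonneg b1, abs_nonneg b2]) (by norm_num)
    linarith
  have hu00' : |u00| ≤ 4 * Q := by linarith [hQnn]
  -- final assembly
  have hRHS : ((p 0 - rad p)⁻¹ *
        ((∑ a : Fin 2, ∑ γ : Fin 3, |pd γ (boost a φ) p|)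
          + ∑ γ : Fin 3, |pd γ φ p|)
        + (p 0) * (p 0 - rad p)⁻¹ * |f p|) = Q := by
    rw [hQdef, hSdef, hdA00, hdA01, hdA02, hdA10, hdA11, hdA12, hdb0, hdb1, hdb2]
    simp only [Fin.sum_univ_three, Fin.sum_univ_two]
    ring
  rw [hRHS]
  fin_cases α <;> fin_cases β <;>
    simp only [Fin.zero_eta, Fin.mk_one, show (⟨2, by norm_num⟩ : Fin 3) = 2 from rfl] <;>
    first
    | (rw [← hd00]; exact hu00')
    | (rw [← hd01]; exact hu01.trans (by linarith [hQnn]))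
    | (rw [← hd02]; exact hu02.trans (by linarith [hQnn]))
    | (rw [← hd11]; exact hu11)
    | (rw [← hd12]; exact hu12)
    | (rw [← hd22]; exact hu22)
    | (rw [s01]; exact hu01.trans (by linarith [hQnn]))
    | (rw [s02]; exact hu02.trans (by linarith [hQnn]))
    | (rw [s12]; exact hu12)
end
end

section
/- Nonlinear transformation removing the wave–Klein-Gordon product from the wave equation. Let w, v, F_v be smooth functions on an open subset of ℝ^{1+2} satisfying −□w = w v and −□v + v = F_v. Define W := w + w v. Then W satisfies the wave equation −□W = w v² + F_v w − 2 η^{αβ} ∂_α w ∂_β v, i.e. −□W = w v² + F_v w − 2 Q₀(w, v). -/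
noncomputable section

open MeasureTheory

lemma pd_congr {f g : Pt → ℝ} {p : Pt} (h : f =ᶠ[nhds p] g) (i : Fin 3) :
    pd i f p = pd i g p := by
  unfold pd; rw [h.fderiv_eq]

lemma pd_add {f g : Pt → ℝ} {p : Pt} (hf : DifferentiableAt ℝ f p)
    (hg : DifferentiableAt ℝ g p) (i : Fin 3) :
    pd i (fun q => f q + g q) p = pd i f p + pd i g p := by
  unfold pd; rw [fderiv_fun_add hf hg]; simp

lemma pd_mul {f g : Pt → ℝ} {p : Pt} (hf : DifferentiableAt ℝ f p)
    (hg : DifferentiableAt ℝ g p) (i : Fin 3) :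
    pd i (fun q => f q * g q) p = pd i f p * g p + f p * pd i g p := by
  unfold pd; rw [fderiv_fun_mul hf hg]
  simp [ContinuousLinearMap.add_apply, ContinuousLinearMap.smul_apply, smul_eq_mul]
  ring

lemma contDiffOn_pd {f : Pt → ℝ} {U : Set Pt} (hU : IsOpen U)
    (hf : ContDiffOn ℝ (⊤ : ℕ∞) f U) (i : Fin 3) :
    ContDiffOn ℝ (⊤ : ℕ∞) (pd i f) U := by
  have h1 : ContDiffOn ℝ (⊤ : ℕ∞) (fun p => fderiv ℝ f p) U :=
    hf.fderiv_of_isOpen hU (by exact_mod_cast le_top)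
  exact h1.clm_apply contDiffOn_const

/-- **Nonlinear transformation removing the wave–Klein-Gordon product from the wave
equation** (Example 3.2). If `−□w = wv` and `−□v + v = F_v` on an open set `U`, then
`W := w + wv` solves `−□W = wv² + F_v w − 2Q₀(w,v)` on `U`, where
`Q₀(w,v) = −∂_tw ∂_tv + Σ_a ∂_aw ∂_av`. -/
theorem wave_KleinGordon_transformation
    (U : Set Pt) (hU : IsOpen U)
    (w v Fv : Pt → ℝ)
    (hw : ContDiffOn ℝ (⊤ : ℕ∞) w U) (hv : ContDiffOn ℝ (⊤ : ℕ∞) v U)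
    (hFv : ContDiffOn ℝ (⊤ : ℕ∞) Fv U)
    (heqw : ∀ p ∈ U, negBox w p = w p * v p)
    (heqv : ∀ p ∈ U, negBox v p + v p = Fv p) :
    ∀ p ∈ U,
      negBox (fun q => w q + w q * v q) p
        = w p * (v p)^2 + Fv p * w p
          - 2 * (-(pd 0 w p * pd 0 v p) + pd 1 w p * pd 1 v p + pd 2 w p * pd 2 v p) := by
  intro p hp
  have hmem : U ∈ nhds p := hU.mem_nhds hp
  have hdw : ∀ {q : Pt}, q ∈ U → DifferentiableAt ℝ w q := fun {q} hq =>
    (hw.contDiffAt (hU.mem_nhds hq)).differentiableAt (by simp)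
  have hdv : ∀ {q : Pt}, q ∈ U → DifferentiableAt ℝ v q := fun {q} hq =>
    (hv.contDiffAt (hU.mem_nhds hq)).differentiableAt (by simp)
  have hdpdw : ∀ (i : Fin 3) {q : Pt}, q ∈ U → DifferentiableAt ℝ (pd i w) q :=
    fun i {q} hq =>
    ((contDiffOn_pd hU hw i).contDiffAt (hU.mem_nhds hq)).differentiableAt (by simp)
  have hdpdv : ∀ (i : Fin 3) {q : Pt}, q ∈ U → DifferentiableAt ℝ (pd i v) q :=
    fun i {q} hq =>
    ((contDiffOn_pd hU hv i).contDiffAt (hU.mem_nhds hq)).differentiableAt (by simp)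
  have key : ∀ i : Fin 3, pd i (pd i (fun q => w q + w q * v q)) p
      = pd i (pd i w) p + (pd i (pd i w) p * v p + 2 * (pd i w p * pd i v p)
          + w p * pd i (pd i v) p) := by
    intro i
    have hev : pd i (fun q => w q + w q * v q)
        =ᶠ[nhds p] (fun q => pd i w q + (pd i w q * v q + w q * pd i v q)) := by
      filter_upwards [hmem] with q hq
      rw [pd_add (g := fun q => w q * v q) (hdw hq) ((hdw hq).mul (hdv hq)), pd_mul (hdw hq) (hdv hq)]
    rw [pd_congr hev i,
      pd_add (g := fun q => pd i w q * v q + w q * pd i v q) (hdpdw i hp) (((hdpdw i hp).mul (hdv hp)).add ((hdw hp).mul (hdpdv i hp))),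
      pd_add (f := fun q => pd i w q * v q) (g := fun q => w q * pd i v q) ((hdpdw i hp).mul (hdv hp)) ((hdw hp).mul (hdpdv i hp)),
      pd_mul (hdpdw i hp) (hdv hp), pd_mul (hdw hp) (hdpdv i hp)]
    ring
  have hw' := heqw p hp
  have hv' := heqv p hp
  unfold negBox at hw' hv' ⊢
  rw [key 0, key 1, key 2]
  linear_combination (1 + v p) * hw' + w p * hv'
end
end

section
/- Nonlinear transformation removing the wave–wave product from the Klein-Gordon equation. Let w, v, F_w be smooth functions on an open subset of ℝ^{1+2} satisfying −□w = F_w and −□v + v = w². Define V := v − w². Then V satisfies the Klein-Gordon equation −□V + V = −2 F_w w + 2 η^{αβ} ∂_α w ∂_β w, i.e. −□V + V = −2 F_w w + 2 Q₀(w, w). -/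
noncomputable section

open MeasureTheory

lemma pd_contDiffOn {U : Set Pt} (hU : IsOpen U) {φ : Pt → ℝ}
    (hφ : ContDiffOn ℝ (⊤ : ℕ∞) φ U) (i : Fin 3) :
    ContDiffOn ℝ (⊤ : ℕ∞) (pd i φ) U := by
  have h : ContDiffOn ℝ (⊤ : ℕ∞) (fun x => fderiv ℝ φ x) U :=
    hφ.fderiv_of_isOpen hU (mod_cast le_top)
  exact h.clm_apply contDiffOn_const

lemma pd_first {U : Set Pt} (hU : IsOpen U) {w v : Pt → ℝ}
    (hw : ContDiffOn ℝ (⊤ : ℕ∞) w U) (hv : ContDiffOn ℝ (⊤ : ℕ∞) v U)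
    (i : Fin 3) {p : Pt} (hp : p ∈ U) :
    pd i (fun q => v q - (w q)^2) p = pd i v p - 2 * w p * pd i w p := by
  have hw' : DifferentiableAt ℝ w p :=
    (hw.contDiffAt (hU.mem_nhds hp)).differentiableAt (by simp)
  have hv' : DifferentiableAt ℝ v p :=
    (hv.contDiffAt (hU.mem_nhds hp)).differentiableAt (by simp)
  have hD : HasFDerivAt (fun q => v q - (w q)^2)
      (fderiv ℝ v p - (w p • fderiv ℝ w p + w p • fderiv ℝ w p)) p := by
    simp only [sq]
    exact hv'.hasFDerivAt.sub (hw'.hasFDerivAt.mul hw'.hasFDerivAt)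
  simp only [pd, hD.fderiv]
  simp
  ring

lemma pd_second {U : Set Pt} (hU : IsOpen U) {w v : Pt → ℝ}
    (hw : ContDiffOn ℝ (⊤ : ℕ∞) w U) (hv : ContDiffOn ℝ (⊤ : ℕ∞) v U)
    (i : Fin 3) {p : Pt} (hp : p ∈ U) :
    pd i (pd i (fun q => v q - (w q)^2)) p
      = pd i (pd i v) p - 2 * pd i w p * pd i w p - 2 * w p * pd i (pd i w) p := by
  have heq : pd i (fun q => v q - (w q)^2) =ᶠ[nhds p]
      (fun q => pd i v q - 2 * w q * pd i w q) := by
    filter_upwards [hU.mem_nhds hp] with q hq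
    exact pd_first hU hw hv i hq
  have hw1 : DifferentiableAt ℝ w p :=
    (hw.contDiffAt (hU.mem_nhds hp)).differentiableAt (by simp)
  have hw2 : DifferentiableAt ℝ (pd i w) p :=
    ((pd_contDiffOn hU hw i).contDiffAt (hU.mem_nhds hp)).differentiableAt (by simp)
  have hv2 : DifferentiableAt ℝ (pd i v) p :=
    ((pd_contDiffOn hU hv i).contDiffAt (hU.mem_nhds hp)).differentiableAt (by simp)
  have hD : HasFDerivAt (fun q => pd i v q - 2 * w q * pd i w q)
      (fderiv ℝ (pd i v) p -
        ((2 * w p) • fderiv ℝ (pd i w) p + pd i w p • ((2:ℝ) • fderiv ℝ w p))) p := by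
    have hm : HasFDerivAt (fun q => 2 * w q) ((2:ℝ) • fderiv ℝ w p) p :=
      hw1.hasFDerivAt.const_mul 2
    exact hv2.hasFDerivAt.sub (hm.mul hw2.hasFDerivAt)
  have key := (heq.fderiv_eq (𝕜 := ℝ)).trans hD.fderiv
  show (fderiv ℝ (pd i fun q => v q - (w q)^2) p) (Pi.single i 1) = _
  rw [key]
  simp only [ContinuousLinearMap.sub_apply, ContinuousLinearMap.add_apply,
    ContinuousLinearMap.smul_apply, smul_eq_mul, pd]
  ring

/-- **Nonlinear transformation removing the wave–wave product from the Klein-Gordon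
equation** (Example 3.3). If `−□w = F_w` and `−□v + v = w²` on an open set `U`, then
`V := v − w²` solves `−□V + V = −2F_w w + 2Q₀(w,w)` on `U`, where
`Q₀(w,w) = −(∂_tw)² + Σ_a (∂_aw)²`. -/
theorem KleinGordon_wave_transformation
    (U : Set Pt) (hU : IsOpen U)
    (w v Fw : Pt → ℝ)
    (hw : ContDiffOn ℝ (⊤ : ℕ∞) w U) (hv : ContDiffOn ℝ (⊤ : ℕ∞) v U)
    (hFw : ContDiffOn ℝ (⊤ : ℕ∞) Fw U)
    (heqw : ∀ p ∈ U, negBox w p = Fw p)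
    (heqv : ∀ p ∈ U, negBox v p + v p = (w p)^2) :
    ∀ p ∈ U,
      negBox (fun q => v q - (w q)^2) p + (v p - (w p)^2)
        = -2 * Fw p * w p
          + 2 * (-(pd 0 w p * pd 0 w p) + pd 1 w p * pd 1 w p + pd 2 w p * pd 2 w p) := by
  intro p hp
  have h0 := pd_second hU hw hv 0 hp
  have h1 := pd_second hU hw hv 1 hp
  have h2 := pd_second hU hw hv 2 hp
  have hw' := heqw p hp
  have hv' := heqv p hp
  simp only [negBox] at *
  rw [h0, h1, h2]
  linear_combination hv' - 2 * w p * hw'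
end
end
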